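/- arXiv:2511.01396 — 5 statements merged into one kernel-verified Lean document; each statement's English description precedes it below -/
import Mathlib

section
/- Let G^C be a C-DAG, let G_can be its canonical compatible graph, and let G^m be an ADMG compatible with G^C in which, within each cluster, the indices of the vertices follow a topological order of G^m. Then the union G_can ∪ G^m is acyclic and is an ADMG compatible with G^C. -/
/-!  Mixed graphs, ADMGs, d-separation, structures of interest, and cluster DAGs
(following Anand et al. and the cyclic C-DAG extension). -/

/-- The way an edge is traversed along a path: `fwd` = directed edge pointing
towards the right endpoint, `bwd` = directed edge pointing towards the left
endpoint, `both` = bidirected edge (arrowheads at both endpoints). -/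
inductive Link : Type
  | fwd
  | bwd
  | both
  deriving DecidableEq

/-- Is there an arrowhead at the right endpoint of the link? -/
def Link.headRight : Link → Bool
  | .fwd => true
  | .bwd => false
  | .both => true

/-- Is there an arrowhead at the left endpoint of the link? -/
def Link.headLeft : Link → Bool
  | .fwd => false
  | .bwd => true
  | .both => true

/-- A mixed graph on a vertex set `verts`: a set of directed edges and a
(symmetric) set of bidirected edges, all between vertices of `verts`. -/
structure MixedGraph (V : Type*) where
  verts : Set V
  dir : V → V → Prop
  bi : V → V → Prop
  dir_mem : ∀ ⦃a b : V⦄, dir a b → a ∈ verts ∧ b ∈ verts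
  bi_mem : ∀ ⦃a b : V⦄, bi a b → a ∈ verts ∧ b ∈ verts
  bi_symm : ∀ ⦃a b : V⦄, bi a b → bi b a

namespace MixedGraph

variable {V C : Type*}

/-- `G.Anc v w` : there is a directed path from `v` to `w`
(`v` is an ancestor of `w`, `w` a descendant of `v`). -/
def Anc (G : MixedGraph V) : V → V → Prop := Relation.ReflTransGen G.dir

/-- The set of ancestors of the set `Z` in `G`. -/
def AncSet (G : MixedGraph V) (Z : Set V) : Set V := {v | ∃ z ∈ Z, G.Anc v z}

/-- The directed part of `G` has no directed cycle. -/
def Acyclic (G : MixedGraph V) : Prop := ∀ ⦃a b : V⦄, G.dir a b → ¬ G.Anc b a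

/-- An acyclic directed mixed graph: no directed cycle, and all edges join
distinct vertices. -/
def IsADMG (G : MixedGraph V) : Prop :=
  G.Acyclic ∧ (∀ v, ¬ G.dir v v) ∧ (∀ v, ¬ G.bi v v)

/-- `H` is a subgraph of `G`. -/
def IsSubgraph (H G : MixedGraph V) : Prop :=
  H.verts ⊆ G.verts ∧ (∀ ⦃a b : V⦄, H.dir a b → G.dir a b) ∧
    (∀ ⦃a b : V⦄, H.bi a b → G.bi a b)

/-- Adjacency, viewing all edges as undirected. -/
def Adj (G : MixedGraph V) (a b : V) : Prop := G.dir a b ∨ G.dir b a ∨ G.bi a b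

/-- `G` has a single connected component (viewing all edges as undirected). -/
def Connected (G : MixedGraph V) : Prop :=
  G.verts.Nonempty ∧ ∀ a ∈ G.verts, ∀ b ∈ G.verts, Relation.ReflTransGen G.Adj a b

/-- A root: a vertex with no outgoing directed edge. -/
def IsRoot (G : MixedGraph V) (v : V) : Prop := v ∈ G.verts ∧ ∀ w, ¬ G.dir v w

/-- The set of roots of `G`. -/
def roots (G : MixedGraph V) : Set V := {v | G.IsRoot v}

/-- A structure of interest: an ADMG with a single connected component in which
every vertex has at most one outgoing directed edge, or exactly two outgoing
directed edges and no edge with an arrowhead at it. -/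
def IsSOI (σ : MixedGraph V) : Prop :=
  σ.IsADMG ∧ σ.Connected ∧
    ∀ v ∈ σ.verts,
      (∀ ⦃w₁ w₂ : V⦄, σ.dir v w₁ → σ.dir v w₂ → w₁ = w₂) ∨
      ((∃ w₁ w₂, w₁ ≠ w₂ ∧ σ.dir v w₁ ∧ σ.dir v w₂ ∧
          ∀ w, σ.dir v w → w = w₁ ∨ w = w₂) ∧
        (∀ w, ¬ σ.dir w v) ∧ (∀ w, ¬ σ.bi v w))

/-- A structure of interest `σ` (as a subgraph of the ambient graph) connects
`X` and `Y` under `Z`: it contains a vertex of `X` and a vertex of `Y`, its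
roots lie in `X ∪ Y ∪ Z`, and no non-root vertex of `σ` lies in `Z`. -/
def Connects (σ : MixedGraph V) (X Y Z : Set V) : Prop :=
  (σ.verts ∩ X).Nonempty ∧ (σ.verts ∩ Y).Nonempty ∧
    σ.roots ⊆ X ∪ Y ∪ Z ∧ ∀ v ∈ σ.verts, ¬ σ.IsRoot v → v ∉ Z

/-- The link `l` joins `a` (left) to `b` (right) in `G`. -/
def LinkOk (G : MixedGraph V) (a : V) (l : Link) (b : V) : Prop :=
  match l with
  | .fwd => G.dir a b
  | .bwd => G.dir b a
  | .both => G.bi a b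

/-- A walk from `a`, given as the list of successive (link, next vertex) steps. -/
inductive IsWalk (G : MixedGraph V) : V → List (Link × V) → Prop
  | nil (v : V) : IsWalk G v []
  | cons {a b : V} {l : Link} {rest : List (Link × V)} :
      G.LinkOk a l b → IsWalk G b rest → IsWalk G a ((l, b) :: rest)

/-- The vertices visited by a walk. -/
def pathVerts (a : V) (steps : List (Link × V)) : List V := a :: steps.map Prod.snd

/-- The last vertex of a walk. -/
def lastVert (a : V) (steps : List (Link × V)) : V := (steps.map Prod.snd).getLastD a

/-- A path: a walk visiting pairwise distinct vertices. -/
def IsPath (G : MixedGraph V) (a : V) (steps : List (Link × V)) : Prop :=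
  G.IsWalk a steps ∧ (pathVerts a steps).Nodup

/-- Activity of the interior vertex `v`, flanked by links `l₁` and `l₂`,
relative to `Z` : if `v` is a collider it must be an ancestor of `Z`
(in particular possibly in `Z`), otherwise it must avoid `Z`. -/
def ActiveTriple (G : MixedGraph V) (Z : Set V) (l₁ : Link) (v : V) (l₂ : Link) : Prop :=
  if l₁.headRight && l₂.headLeft then v ∈ G.AncSet Z else v ∉ Z

/-- `X` and `Y` are d-connected given `Z` in `G`: some path from a vertex of
`X` to a vertex of `Y` is active given `Z`. -/
def DConnected (G : MixedGraph V) (X Y Z : Set V) : Prop :=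
  ∃ (a : V) (steps : List (Link × V)),
    G.IsPath a steps ∧ a ∈ X ∧ lastVert a steps ∈ Y ∧
    a ∉ Z ∧ lastVert a steps ∉ Z ∧
    List.Chain' (fun s t => G.ActiveTriple Z s.1 s.2 t.1) steps

/-- The mutilated graph `G_{Ā,B̲}` : every edge with an arrowhead at a vertex
of `A` and every directed edge out of a vertex of `B` is deleted. -/
def mutilate (G : MixedGraph V) (A B : Set V) : MixedGraph V where
  verts := G.verts
  dir a b := G.dir a b ∧ b ∉ A ∧ a ∉ B
  bi a b := G.bi a b ∧ a ∉ A ∧ b ∉ A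
  dir_mem := fun _ _ h => G.dir_mem h.1
  bi_mem := fun _ _ h => G.bi_mem h.1
  bi_symm := fun _ _ h => ⟨G.bi_symm h.1, h.2.2, h.2.1⟩

/-- Union of two mixed graphs. -/
def union (G H : MixedGraph V) : MixedGraph V where
  verts := G.verts ∪ H.verts
  dir a b := G.dir a b ∨ H.dir a b
  bi a b := G.bi a b ∨ H.bi a b
  dir_mem := by
    rintro a b (h | h)
    · exact ⟨Or.inl (G.dir_mem h).1, Or.inl (G.dir_mem h).2⟩
    · exact ⟨Or.inr (H.dir_mem h).1, Or.inr (H.dir_mem h).2⟩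
  bi_mem := by
    rintro a b (h | h)
    · exact ⟨Or.inl (G.bi_mem h).1, Or.inl (G.bi_mem h).2⟩
    · exact ⟨Or.inr (H.bi_mem h).1, Or.inr (H.bi_mem h).2⟩
  bi_symm := by
    rintro a b (h | h)
    · exact Or.inl (G.bi_symm h)
    · exact Or.inr (H.bi_symm h)

/-- Add the directed edge `x → y`. -/
def addDir (G : MixedGraph V) (x y : V) : MixedGraph V where
  verts := G.verts ∪ {x, y}
  dir a b := G.dir a b ∨ (a = x ∧ b = y)
  bi := G.bi
  dir_mem := by
    rintro a b (h | ⟨rfl, rfl⟩)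
    · exact ⟨Or.inl (G.dir_mem h).1, Or.inl (G.dir_mem h).2⟩
    · exact ⟨Or.inr (by simp), Or.inr (by simp)⟩
  bi_mem := fun _ _ h => ⟨Or.inl (G.bi_mem h).1, Or.inl (G.bi_mem h).2⟩
  bi_symm := fun _ _ h => G.bi_symm h

/-- Add the bidirected edge `x ↔ y`. -/
def addBi (G : MixedGraph V) (x y : V) : MixedGraph V where
  verts := G.verts ∪ {x, y}
  dir := G.dir
  bi a b := G.bi a b ∨ (a = x ∧ b = y) ∨ (a = y ∧ b = x)
  dir_mem := fun _ _ h => ⟨Or.inl (G.dir_mem h).1, Or.inl (G.dir_mem h).2⟩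
  bi_mem := by
    rintro a b (h | ⟨rfl, rfl⟩ | ⟨rfl, rfl⟩)
    · exact ⟨Or.inl (G.bi_mem h).1, Or.inl (G.bi_mem h).2⟩
    · exact ⟨Or.inr (by simp), Or.inr (by simp)⟩
    · exact ⟨Or.inr (by simp), Or.inr (by simp)⟩
  bi_symm := by
    rintro a b (h | ⟨rfl, rfl⟩ | ⟨rfl, rfl⟩)
    · exact Or.inl (G.bi_symm h)
    · exact Or.inr (Or.inr ⟨rfl, rfl⟩)
    · exact Or.inr (Or.inl ⟨rfl, rfl⟩)

/-- Delete the directed edge `x → y`. -/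
def deleteDir (G : MixedGraph V) (x y : V) : MixedGraph V where
  verts := G.verts
  dir a b := G.dir a b ∧ ¬(a = x ∧ b = y)
  bi := G.bi
  dir_mem := fun _ _ h => G.dir_mem h.1
  bi_mem := fun _ _ h => G.bi_mem h
  bi_symm := fun _ _ h => G.bi_symm h

/-- Delete the bidirected edge `x ↔ y`. -/
def deleteBi (G : MixedGraph V) (x y : V) : MixedGraph V where
  verts := G.verts
  dir := G.dir
  bi a b := G.bi a b ∧ ¬((a = x ∧ b = y) ∨ (a = y ∧ b = x))
  dir_mem := fun _ _ h => G.dir_mem h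
  bi_mem := fun _ _ h => G.bi_mem h.1
  bi_symm := fun _ _ h => ⟨G.bi_symm h.1, fun hc => h.2 (by tauto)⟩

/-- The cluster of micro-variables assigned to the cluster label `c`. -/
def clusterOf (π : V → C) (c : C) : Set V := {v | π v = c}

/-- `G` (an ADMG on all of `V`) is compatible with the cluster-level mixed
graph `GC` : `GC` is exactly the cluster graph induced by `G` via the
partition `π`. -/
def Compatible (π : V → C) (GC : MixedGraph C) (G : MixedGraph V) : Prop :=
  G.IsADMG ∧ G.verts = Set.univ ∧
    (∀ c d, GC.dir c d ↔ ∃ a b, π a = c ∧ π b = d ∧ G.dir a b) ∧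
    (∀ c d, GC.bi c d ↔ ∃ a b, π a = c ∧ π b = d ∧ G.bi a b)

/-- Within each cluster, the indices of the vertices (given by the ambient
linear order on `V`) follow a topological order of `G`. -/
def FollowsTopo [LinearOrder V] (π : V → C) (G : MixedGraph V) : Prop :=
  ∃ t : V → ℕ, Function.Injective t ∧ (∀ ⦃a b : V⦄, G.dir a b → t a < t b) ∧
    ∀ ⦃a b : V⦄, π a = π b → a < b → t a < t b

/-- The cluster `c` has cardinality at most one. -/
def SingletonCluster (π : V → C) (c : C) : Prop :=
  ∀ ⦃a b : V⦄, π a = c → π b = c → a = b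

/-- `GC` contains a directed cycle all of whose clusters have cardinality 1. -/
def HasSingletonCycle (π : V → C) (GC : MixedGraph C) : Prop :=
  ∃ c, Relation.TransGen
    (fun c₁ c₂ => GC.dir c₁ c₂ ∧ SingletonCluster π c₁ ∧ SingletonCluster π c₂) c c

/-- The canonical compatible graph of `GC` : all bidirected edges between the
relevant clusters; for self-loops all within-cluster edges following the index
order; for each directed edge between distinct clusters the edge from the
first vertex of the source to the last vertex of the target. -/
def canonicalGraph [LinearOrder V] (π : V → C) (GC : MixedGraph C) : MixedGraph V where
  verts := Set.univ
  dir a b :=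
    (π a = π b ∧ GC.dir (π a) (π b) ∧ a < b) ∨
    (π a ≠ π b ∧ GC.dir (π a) (π b) ∧
      IsLeast (clusterOf π (π a)) a ∧ IsGreatest (clusterOf π (π b)) b)
  bi a b := a ≠ b ∧ GC.bi (π a) (π b)
  dir_mem := fun _ _ _ => ⟨trivial, trivial⟩
  bi_mem := fun _ _ _ => ⟨trivial, trivial⟩
  bi_symm := fun _ _ h => ⟨h.1.symm, GC.bi_symm h.2⟩

/-- The unfolded graph of `GC` : the canonical compatible graph together with
all eligible directed edges, i.e. those corresponding to a cluster-level
directed edge whose addition to the canonical graph creates no directed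
cycle. -/
def unfoldedGraph [LinearOrder V] (π : V → C) (GC : MixedGraph C) : MixedGraph V where
  verts := Set.univ
  dir a b := (canonicalGraph π GC).dir a b ∨
    (GC.dir (π a) (π b) ∧ ((canonicalGraph π GC).addDir a b).Acyclic)
  bi a b := (canonicalGraph π GC).bi a b
  dir_mem := fun _ _ _ => ⟨trivial, trivial⟩
  bi_mem := fun _ _ _ => ⟨trivial, trivial⟩
  bi_symm := fun _ _ h => (canonicalGraph π GC).bi_symm h

/-- Failure of rule `i` of Pearl's calculus (atomically) in `G` :
`0` ↦ rule 1, `1` ↦ rule 2, `2` ↦ rule 3. -/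
def RuleFails (G : MixedGraph V) (W X Y Z : Set V) (i : Fin 3) : Prop :=
  if i = 0 then (G.mutilate W ∅).DConnected X Y (W ∪ Z)
  else if i = 1 then (G.mutilate W X).DConnected X Y (W ∪ Z)
  else (G.mutilate (W ∪ (X \ (G.mutilate W ∅).AncSet Z)) ∅).DConnected X Y (W ∪ Z)

end MixedGraph

open MixedGraph

/-- The union of the canonical compatible graph with any
compatible graph (whose within-cluster indices follow a topological order) is
acyclic and compatible. -/
theorem stmt9 {V C : Type} [Fintype V] [LinearOrder V]
    (π : V → C) (hπ : Function.Surjective π)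
    (GC : MixedGraph C) (hGCverts : GC.verts = Set.univ)
    (G : MixedGraph V) (hG : MixedGraph.Compatible π GC G)
    (htopo : MixedGraph.FollowsTopo π G) :
    ((MixedGraph.canonicalGraph π GC).union G).Acyclic ∧
    MixedGraph.Compatible π GC ((MixedGraph.canonicalGraph π GC).union G) := by
  obtain ⟨t, hti, htd, htc⟩ := htopo
  obtain ⟨hADMG, hverts, hdiriff, hbiiff⟩ := hG
  have hmono : ∀ a b : V, π a = π b → a ≤ b → t a ≤ t b := by
    intro a b hpi hle
    rcases lt_or_eq_of_le hle with h | rfl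
    · exact le_of_lt (htc hpi h)
    · exact le_rfl
  have hkey : ∀ a b : V, ((MixedGraph.canonicalGraph π GC).union G).dir a b → t a < t b := by
    rintro a b (h | h)
    · rcases h with ⟨heq, _, hlt⟩ | ⟨hne, hdir, hleast, hgreat⟩
      · exact htc heq hlt
      · obtain ⟨a', b', ha', hb', hd⟩ := (hdiriff _ _).mp hdir
        have h1 : t a ≤ t a' := hmono a a' ha'.symm (hleast.2 ha')
        have h2 : t b' ≤ t b := hmono b' b hb' (hgreat.2 hb')
        exact lt_of_le_of_lt h1 (lt_of_lt_of_le (htd hd) h2)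
    · exact htd h
  have hanc : ∀ a b : V, ((MixedGraph.canonicalGraph π GC).union G).Anc a b → t a ≤ t b := by
    intro a b h
    induction h with
    | refl => exact le_rfl
    | tail _ hd ih => exact le_of_lt (lt_of_le_of_lt ih (hkey _ _ hd))
  have hacy : ((MixedGraph.canonicalGraph π GC).union G).Acyclic := by
    intro a b hd hA
    exact absurd (lt_of_lt_of_le (hkey _ _ hd) (hanc _ _ hA)) (lt_irrefl _)
  refine ⟨hacy, ⟨hacy, ?_, ?_⟩, ?_, ?_, ?_⟩
  · intro v hv
    exact lt_irrefl _ (hkey v v hv)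
  · rintro v (⟨hne, _⟩ | h)
    · exact hne rfl
    · exact hADMG.2.2 v h
  · show Set.univ ∪ G.verts = Set.univ
    simp
  · intro c d
    constructor
    · intro h
      obtain ⟨a, b, ha, hb, hd⟩ := (hdiriff c d).mp h
      exact ⟨a, b, ha, hb, Or.inr hd⟩
    · rintro ⟨a, b, rfl, rfl, h | h⟩
      · rcases h with ⟨_, hd, _⟩ | ⟨_, hd, _⟩ <;> exact hd
      · exact (hdiriff _ _).mpr ⟨a, b, rfl, rfl, h⟩
  · intro c d
    constructor
    · intro h
      obtain ⟨a, b, ha, hb, hd⟩ := (hbiiff c d).mp h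
      exact ⟨a, b, ha, hb, Or.inr hd⟩
    · rintro ⟨a, b, rfl, rfl, h | h⟩
      · exact h.2
      · exact (hbiiff _ _).mpr ⟨a, b, rfl, rfl, h⟩
end

section
/- Let G^C be a C-DAG and let G_u be its unfolded graph. Then every ADMG G^m compatible with G^C is a subgraph of G_u up to a permutation of the indices within each cluster: there exists a bijection of V^m that maps each cluster onto itself such that the relabeled graph G^m has all of its directed edges among the directed edges of G_u and all of its bidirected edges among the bidirected edges of G_u. -/
open MixedGraph


private lemma rtg_le {α W : Type*} [Preorder W] {R : α → α → Prop} {s : α → W}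
    (h : ∀ x y, R x y → s x < s y) {a b : α} (hab : Relation.ReflTransGen R a b) :
    s a ≤ s b := by
  induction hab with
  | refl => exact le_refl _
  | tail hrt hstep ih => exact ih.trans (le_of_lt (h _ _ hstep))

private lemma sortEquiv {S W : Type*} [Fintype S] [LinearOrder S] [LinearOrder W]
    (u : S → W) (hu : Function.Injective u) :
    ∃ f : S ≃ S, ∀ x y : S, x < y → u (f x) < u (f y) := by
  classical
  let eR : S ≃ Set.range u := Equiv.ofInjective u hu
  haveI : Fintype (Set.range u) := Fintype.ofFinite _
  have hcard : Fintype.card (Set.range u) = Fintype.card S := Fintype.card_congr eR.symm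
  let iso₁ : Fin (Fintype.card S) ≃o S := monoEquivOfFin S rfl
  let iso₂ : Fin (Fintype.card S) ≃o Set.range u := monoEquivOfFin _ hcard
  refine ⟨iso₁.symm.toEquiv.trans (iso₂.toEquiv.trans eR.symm), ?_⟩
  intro x y hxy
  have h1 : iso₁.symm x < iso₁.symm y := iso₁.symm.strictMono hxy
  have h2 : iso₂ (iso₁.symm x) < iso₂ (iso₁.symm y) := iso₂.strictMono h1
  have h3 : ∀ z : Set.range u, u (eR.symm z) = z := fun z =>
    congrArg Subtype.val (eR.apply_symm_apply z)
  have h4 : (iso₂ (iso₁.symm x) : W) < (iso₂ (iso₁.symm y) : W) := h2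
  simpa [Equiv.trans_apply, h3] using h4

/-- Every compatible graph is a subgraph of the unfolded
graph up to a permutation of the indices within each cluster. -/
theorem stmt10 {V C : Type} [Fintype V] [LinearOrder V]
    (π : V → C) (hπ : Function.Surjective π)
    (GC : MixedGraph C) (hGCverts : GC.verts = Set.univ)
    (G : MixedGraph V) (hG : MixedGraph.Compatible π GC G) :
    ∃ e : Equiv.Perm V, (∀ v, π (e v) = π v) ∧
      (∀ a b : V, G.dir a b → (MixedGraph.unfoldedGraph π GC).dir (e a) (e b)) ∧
      (∀ a b : V, G.bi a b → (MixedGraph.unfoldedGraph π GC).bi (e a) (e b)) := by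
    classical
  obtain ⟨⟨hac, hnd, hnb⟩, hverts, hdir, hbi⟩ := hG
  -- a strictly monotone "topological" potential for `G`
  set t : V → ℕ := fun v => {w | G.Anc w v}.ncard with ht
  have htmono : ∀ a b, G.dir a b → t a < t b := by
    intro a b hab
    refine Set.ncard_lt_ncard ?_ (Set.toFinite _)
    constructor
    · intro w hw
      exact Relation.ReflTransGen.trans hw (Relation.ReflTransGen.single hab)
    · intro hsub
      exact hac hab (hsub Relation.ReflTransGen.refl)
  let uV : V → ℕ ×ₗ V := fun v => toLex (t v, v)
  have huVinj : Function.Injective uV := by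
    intro a b h
    have := congrArg (fun x => (ofLex x).2) h
    exact this
  have huVmono : ∀ a b, G.dir a b → uV a < uV b := by
    intro a b h
    have h1 : t a < t b := htmono a b h
    exact Prod.Lex.lt_iff.mpr (Or.inl h1)
  have hSort : ∀ c : C, ∃ f : {v // π v = c} ≃ {v // π v = c},
      ∀ x y : {v // π v = c}, (x : V) < (y : V) → uV ((f x : V)) < uV ((f y : V)) := by
    intro c
    haveI : Fintype {v // π v = c} := Fintype.ofFinite _
    obtain ⟨f, hf⟩ := sortEquiv (fun x : {v // π v = c} => uV x.val)
      (fun x y h => Subtype.ext (huVinj h))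
    exact ⟨f, fun x y h => hf x y (Subtype.coe_lt_coe.mp h)⟩
  choose f hf using hSort
  let g : ∀ c : C, {v // π v = c} ≃ {v // π v = c} := fun c => (f c).symm
  let E : Equiv.Perm V :=
    (Equiv.sigmaFiberEquiv π).symm.trans
      ((Equiv.sigmaCongrRight g).trans (Equiv.sigmaFiberEquiv π))
  have hEapp : ∀ (v : V) (c : C) (h : π v = c), E v = ((g c) ⟨v, h⟩ : V) := by
    intro v c h; subst h; rfl
  have hEsymm : ∀ (v : V) (c : C) (h : π v = c), E.symm v = ((f c) ⟨v, h⟩ : V) := by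
    intro v c h; subst h; rfl
  have hπE : ∀ v, π (E v) = π v := by
    intro v
    rw [hEapp v (π v) rfl]
    exact ((g (π v)) ⟨v, rfl⟩).prop
  have hmono : ∀ a b : V, π a = π b → a < b → uV (E.symm a) < uV (E.symm b) := by
    intro a b hab hlt
    rw [hEsymm a (π a) rfl, hEsymm b (π a) hab.symm]
    exact hf (π a) _ _ hlt
  have hstep : ∀ (a b : V), G.dir a b → ∀ x y : V,
      (((canonicalGraph π GC).addDir (E a) (E b)).dir x y) →
        uV (E.symm x) < uV (E.symm y) := by
    intro a b hab x y hxy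
    rcases hxy with (hcan | ⟨hx, hy⟩)
    · rcases hcan with (⟨hpi, _, hlt⟩ | ⟨hne, hGCd, hleast, hgreatest⟩)
      · exact hmono x y hpi hlt
      · obtain ⟨a₀, b₀, ha₀, hb₀, hd⟩ := (hdir (π x) (π y)).mp hGCd
        have h1 : uV (E.symm x) ≤ uV a₀ := by
          have hmem : E a₀ ∈ clusterOf π (π x) := by
            show π (E a₀) = π x
            rw [hπE a₀, ha₀]
          have hle : x ≤ E a₀ := hleast.2 hmem
          have h0 : E.symm (E a₀) = a₀ := E.symm_apply_apply a₀
          rcases eq_or_lt_of_le hle with heq | hlt'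
          · rw [heq, h0]
          · have := hmono x (E a₀) (Eq.symm hmem) hlt'
            rw [h0] at this
            exact this.le
        have h2 : uV b₀ ≤ uV (E.symm y) := by
          have hmem : E b₀ ∈ clusterOf π (π y) := by
            show π (E b₀) = π y
            rw [hπE b₀, hb₀]
          have hle : E b₀ ≤ y := hgreatest.2 hmem
          have h0 : E.symm (E b₀) = b₀ := E.symm_apply_apply b₀
          rcases eq_or_lt_of_le hle with heq | hlt'
          · rw [← heq, h0]
          · have := hmono (E b₀) y hmem hlt'
            rw [h0] at this
            exact this.le
        exact h1.trans_lt ((huVmono a₀ b₀ hd).trans_le h2)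
    · subst hx; subst hy
      rw [E.symm_apply_apply, E.symm_apply_apply]
      exact huVmono a b hab
  refine ⟨E, hπE, ?_, ?_⟩
  · intro a b hab
    show (canonicalGraph π GC).dir (E a) (E b) ∨
      (GC.dir (π (E a)) (π (E b)) ∧ ((canonicalGraph π GC).addDir (E a) (E b)).Acyclic)
    refine Or.inr ⟨?_, ?_⟩
    · rw [hπE a, hπE b]
      exact (hdir _ _).mpr ⟨a, b, rfl, rfl, hab⟩
    · intro p q hpq hanc
      have h1 := hstep a b hab p q hpq
      have h2 : uV (E.symm q) ≤ uV (E.symm p) :=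
        rtg_le (fun x y h => hstep a b hab x y h) hanc
      exact absurd (h1.trans_le h2) (lt_irrefl _)
  · intro a b hab
    show E a ≠ E b ∧ GC.bi (π (E a)) (π (E b))
    refine ⟨?_, ?_⟩
    · intro h
      exact hnb b (by rwa [E.injective h] at hab)
    · rw [hπE a, hπE b]
      exact (hbi _ _).mpr ⟨a, b, rfl, rfl, hab⟩
end

section
/- Let G^C be a C-DAG, G_can its canonical compatible graph, and G_u its unfolded graph. Let σ be a structure of interest that is a subgraph of G_u. If the union G_can ∪ σ is acyclic, then G_can ∪ σ is an ADMG compatible with G^C. -/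
open MixedGraph

lemma exists_isLeast_aux {V : Type} [Fintype V] [LinearOrder V] {s : Set V}
    (hs : s.Nonempty) : ∃ a, IsLeast s a := by
  obtain ⟨a, ha, hmin⟩ := Set.exists_min_image s id s.toFinite hs
  exact ⟨a, ha, fun b hb => hmin b hb⟩

lemma exists_isGreatest_aux {V : Type} [Fintype V] [LinearOrder V] {s : Set V}
    (hs : s.Nonempty) : ∃ a, IsGreatest s a := by
  obtain ⟨a, ha, hmax⟩ := Set.exists_max_image s id s.toFinite hs
  exact ⟨a, ha, fun b hb => hmax b hb⟩

/-- If `σ` is a structure of interest inside the unfolded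
graph and `G_can ∪ σ` is acyclic, then `G_can ∪ σ` is an ADMG compatible with
`G^C`. -/
theorem stmt11 {V C : Type} [Fintype V] [LinearOrder V]
    (π : V → C) (hπ : Function.Surjective π)
    (GC : MixedGraph C) (hGCverts : GC.verts = Set.univ)
    (hne : ∃ G : MixedGraph V, MixedGraph.Compatible π GC G)
    (σ : MixedGraph V) (hσ : σ.IsSOI)
    (hsub : σ.IsSubgraph (MixedGraph.unfoldedGraph π GC))
    (hacyc : ((MixedGraph.canonicalGraph π GC).union σ).Acyclic) :
    MixedGraph.Compatible π GC ((MixedGraph.canonicalGraph π GC).union σ) := by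
  classical
  obtain ⟨G, ⟨⟨hGacyc, hGdirIrr, hGbiIrr⟩, hGverts, hGdir, hGbi⟩⟩ := hne
  refine ⟨⟨hacyc, ?_, ?_⟩, ?_, ?_, ?_⟩
  · intro v hv
    exact hacyc hv Relation.ReflTransGen.refl
  · rintro v (⟨hvv, _⟩ | hb)
    · exact hvv rfl
    · exact (hsub.2.2 hb).1 rfl
  · simp [MixedGraph.union, MixedGraph.canonicalGraph]
  · intro c d
    constructor
    · intro hcd
      by_cases h : c = d
      · subst h
        obtain ⟨a, b, ha, hb, hab⟩ := (hGdir c c).mp hcd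
        have hne' : a ≠ b := fun h => hGdirIrr a (h ▸ hab)
        rcases lt_or_gt_of_ne hne' with h' | h'
        · refine ⟨a, b, ha, hb, Or.inl (Or.inl ⟨ha.trans hb.symm, ?_, h'⟩)⟩
          rw [ha, hb]; exact hcd
        · refine ⟨b, a, hb, ha, Or.inl (Or.inl ⟨hb.trans ha.symm, ?_, h'⟩)⟩
          rw [ha, hb]; exact hcd
      · obtain ⟨a, haL⟩ := exists_isLeast_aux (s := clusterOf π c) (hπ c)
        obtain ⟨b, hbG⟩ := exists_isGreatest_aux (s := clusterOf π d) (hπ d)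
        have ha : π a = c := haL.1
        have hb : π b = d := hbG.1
        refine ⟨a, b, ha, hb, Or.inl (Or.inr ⟨?_, ?_, ?_, ?_⟩)⟩
        · rw [ha, hb]; exact h
        · rw [ha, hb]; exact hcd
        · rw [ha]; exact haL
        · rw [hb]; exact hbG
    · rintro ⟨a, b, rfl, rfl, (⟨_, h, _⟩ | ⟨_, h, _⟩) | hσab⟩
      · exact h
      · exact h
      · rcases hsub.2.1 hσab with (⟨_, h, _⟩ | ⟨_, h, _⟩) | ⟨h, _⟩ <;> exact h
  · intro c d
    constructor
    · intro hcd
      by_cases h : c = d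
      · subst h
        obtain ⟨a, b, ha, hb, hab⟩ := (hGbi c c).mp hcd
        have hne' : a ≠ b := fun h => hGbiIrr a (h ▸ hab)
        refine ⟨a, b, ha, hb, Or.inl ⟨hne', ?_⟩⟩
        rw [ha, hb]; exact hcd
      · obtain ⟨a, ha⟩ := hπ c
        obtain ⟨b, hb⟩ := hπ d
        refine ⟨a, b, ha, hb, Or.inl ⟨?_, ?_⟩⟩
        · rintro rfl; exact h (ha.symm.trans hb)
        · rw [ha, hb]; exact hcd
    · rintro ⟨a, b, rfl, rfl, ⟨_, h⟩ | hσab⟩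
      · exact h
      · exact (hsub.2.2 hσab).2
end

section
/- Let G^C be a C-DAG with nonempty compatible class, G_can its canonical compatible graph, and G_u its unfolded graph. Let W^C, X^C, Y^C, Z^C be pairwise disjoint sets of clusters, with W^m, X^m, Y^m, Z^m the corresponding unions of clusters. Suppose the mutilated unfolded graph (G_u)_{W̄^m} contains a structure of interest σ that connects X^m and Y^m under W^m ∪ Z^m, with Root(σ) ⊆ W^m ∪ Z^m ∪ Y^m, and such that G_can ∪ σ is acyclic. Then there exists an ADMG G^m compatible with G^C in which X^m and Y^m are d-connected given W^m ∪ Z^m in the mutilated graph G^m_{W̄^m, X̄^m(Z^m)}, where X^m(Z^m) := X^m \ Anc(Z^m, G^m_{W̄^m}); that is, the third rule of Pearl's do-calculus fails in G^m. -/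
namespace MixedGraph

variable {V : Type*}


lemma lastVert_nil (a : V) : lastVert a ([] : List (Link × V)) = a := rfl

lemma lastVert_cons (a : V) (l : Link) (b : V) (s : List (Link × V)) :
    lastVert a ((l, b) :: s) = lastVert b s := by
  simp only [lastVert, List.map_cons, List.getLastD_cons]

lemma lastVert_append (a : V) (p q : List (Link × V)) :
    lastVert a (p ++ q) = lastVert (lastVert a p) q := by
  induction p generalizing a with
  | nil => simp [lastVert]
  | cons s p ih => obtain ⟨l, b⟩ := s; simp [lastVert_cons, ih]

lemma IsWalk.tail' {G : MixedGraph V} {a b l s} (h : G.IsWalk a ((l, b) :: s)) :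
    G.LinkOk a l b ∧ G.IsWalk b s := by cases h with | cons h1 h2 => exact ⟨h1, h2⟩

lemma isWalk_append_iff (G : MixedGraph V) (a : V) (p q : List (Link × V)) :
    G.IsWalk a (p ++ q) ↔ G.IsWalk a p ∧ G.IsWalk (lastVert a p) q := by
  induction p generalizing a with
  | nil => simp [lastVert_nil]; exact fun _ => IsWalk.nil a
  | cons s p ih =>
    obtain ⟨l, b⟩ := s
    rw [List.cons_append]
    constructor
    · intro h
      obtain ⟨hl, hw⟩ := h.tail'
      rw [ih] at hw
      exact ⟨IsWalk.cons hl hw.1, by rw [lastVert_cons]; exact hw.2⟩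
    · rintro ⟨h, hq⟩
      obtain ⟨hl, hw⟩ := h.tail'
      exact IsWalk.cons hl ((ih b).mpr ⟨hw, by rw [lastVert_cons] at hq; exact hq⟩)

/-- split a list at the last occurrence of an element of its `Prod.snd`-image. -/
lemma split_last_snd {α β : Type*} {f : α → β} {a : β} :
    ∀ {l : List α}, a ∈ l.map f → ∃ t₁ p t₂, l = t₁ ++ p :: t₂ ∧ f p = a ∧ a ∉ t₂.map f := by
  intro l
  induction l with
  | nil => simp
  | cons s l ih =>
    intro h
    by_cases hmem : a ∈ l.map f
    · obtain ⟨t₁, p, t₂, rfl, hp, hna⟩ := ih hmem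
      exact ⟨s :: t₁, p, t₂, rfl, hp, hna⟩
    · simp only [List.map_cons, List.mem_cons] at h
      rcases h with h | h
      · exact ⟨[], s, l, rfl, h.symm, hmem⟩
      · exact absurd h hmem

lemma split_dup_snd {α β : Type*} {f : α → β} :
    ∀ {l : List α}, ¬ (l.map f).Nodup →
      ∃ t₁ p t₂ q t₃, l = t₁ ++ (p :: (t₂ ++ q :: t₃)) ∧ f p = f q := by
  intro l
  induction l with
  | nil => simp
  | cons s l ih =>
    intro h
    rw [List.map_cons, List.nodup_cons] at h
    push_neg at h
    by_cases hmem : f s ∈ l.map f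
    · obtain ⟨q, hq, hfq⟩ := List.mem_map.mp hmem
      obtain ⟨t₂, t₃, rfl⟩ := List.append_of_mem hq
      exact ⟨[], s, t₂, q, t₃, rfl, hfq.symm⟩
    · obtain ⟨t₁, p, t₂, q, t₃, rfl, hpq⟩ := ih (h hmem)
      exact ⟨s :: t₁, p, t₂, q, t₃, rfl, hpq⟩

lemma split_last_pred {α : Type*} {P : α → Prop} :
    ∀ {l : List α}, (∃ x ∈ l, P x) →
      ∃ t₁ x t₂, l = t₁ ++ x :: t₂ ∧ P x ∧ ∀ y ∈ t₂, ¬ P y := by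
  intro l
  induction l with
  | nil => simp
  | cons s l ih =>
    intro h
    by_cases hmem : ∃ x ∈ l, P x
    · obtain ⟨t₁, x, t₂, rfl, hx, hn⟩ := ih hmem
      exact ⟨s :: t₁, x, t₂, rfl, hx, hn⟩
    · push_neg at hmem
      obtain ⟨x, hx, hPx⟩ := h
      rcases List.mem_cons.mp hx with rfl | hx
      · exact ⟨[], x, l, rfl, hPx, hmem⟩
      · exact absurd hPx (hmem x hx)

lemma map_split {α β : Type*} {f : α → β} :
    ∀ {l : List α} {A : List β} {b : β} {B : List β}, l.map f = A ++ b :: B →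
      ∃ l₁ p l₂, l = l₁ ++ p :: l₂ ∧ l₁.map f = A ∧ f p = b ∧ l₂.map f = B := by
  intro l
  induction l with
  | nil => intro A b B h; simp at h
  | cons s l ih =>
    intro A b B h
    cases A with
    | nil =>
      simp only [List.map_cons, List.nil_append, List.cons.injEq] at h
      exact ⟨[], s, l, rfl, rfl, h.1, h.2⟩
    | cons a A =>
      simp only [List.map_cons, List.cons_append, List.cons.injEq] at h
      obtain ⟨l₁, p, l₂, rfl, h1, h2, h3⟩ := ih h.2
      exact ⟨s :: l₁, p, l₂, rfl, by simp [h.1, h1], h2, h3⟩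



lemma anc_trans {G : MixedGraph V} {a b c : V} (h1 : G.Anc a b) (h2 : G.Anc b c) :
    G.Anc a c := Relation.ReflTransGen.trans h1 h2

lemma mem_ancSet_of_anc {G : MixedGraph V} {Z : Set V} {a b : V}
    (h1 : G.Anc a b) (h2 : b ∈ G.AncSet Z) : a ∈ G.AncSet Z := by
  obtain ⟨z, hz, hanc⟩ := h2
  exact ⟨z, hz, anc_trans h1 hanc⟩

lemma activeTriple_collider {G : MixedGraph V} {Z : Set V} {l₁ l₂ : Link} {v : V}
    (h : G.ActiveTriple Z l₁ v l₂) (h1 : l₁.headRight = true) (h2 : l₂.headLeft = true) :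
    v ∈ G.AncSet Z := by
  rwa [ActiveTriple, if_pos (by rw [h1, h2]; rfl)] at h

lemma activeTriple_noncollider {G : MixedGraph V} {Z : Set V} {l₁ l₂ : Link} {v : V}
    (h : G.ActiveTriple Z l₁ v l₂) (hnc : ¬ (l₁.headRight = true ∧ l₂.headLeft = true)) :
    v ∉ Z := by
  rwa [ActiveTriple, if_neg (by simpa using hnc)] at h

lemma headLeft_eq_false_iff {l : Link} : l.headLeft = false ↔ l = Link.fwd := by
  cases l <;> simp [Link.headLeft]

lemma headRight_eq_false_iff {l : Link} : l.headRight = false ↔ l = Link.bwd := by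
  cases l <;> simp [Link.headRight]

/-- Lemma B: along an active walk, a directed step that eventually returns
above `v` forces `v` to be an ancestor of `Z`. -/
lemma descend_lemma {G : MixedGraph V} (hac : G.Acyclic) (Z : Set V) :
    ∀ (steps : List (Link × V)) (c u : V) (rest : List (Link × V)) (v : V),
      steps = (Link.fwd, u) :: rest → G.IsWalk c steps →
      List.Chain' (fun s t => G.ActiveTriple Z s.1 s.2 t.1) steps →
      G.Anc v c → G.Anc (lastVert c steps) v → v ∈ G.AncSet Z := by
  intro steps
  induction steps with
  | nil => intro _ _ _ _ h; exact absurd h (by simp)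
  | cons s rest0 ih =>
    rintro c u rest v heq hw hch hvc hlast
    obtain ⟨rfl, rfl⟩ : s = (Link.fwd, u) ∧ rest0 = rest := by
      simpa [List.cons.injEq] using heq
    obtain ⟨hcu, hwrest⟩ := hw.tail'
    have hdir : G.dir c u := hcu
    have hvu : G.Anc v u := Relation.ReflTransGen.tail hvc hdir
    rw [lastVert_cons] at hlast
    cases rest0 with
    | nil =>
      exact absurd (anc_trans hlast hvc) (hac hdir)
    | cons t rest' =>
      obtain ⟨l₂, w⟩ := t
      have htriple : G.ActiveTriple Z Link.fwd u l₂ :=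
        (List.isChain_cons_cons.mp hch).1
      by_cases hl2 : l₂.headLeft = true
      · exact mem_ancSet_of_anc hvu (activeTriple_collider htriple rfl hl2)
      · have : l₂ = Link.fwd := headLeft_eq_false_iff.mp (by simpa using hl2)
        subst this
        exact ih u w rest' v rfl hwrest (List.isChain_cons_cons.mp hch).2 hvu hlast


lemma walk_dconnected {G : MixedGraph V} (hac : G.Acyclic) (X Y Z : Set V) :
    ∀ (n : ℕ) (a : V) (steps : List (Link × V)), steps.length ≤ n →
      G.IsWalk a steps →
      List.Chain' (fun s t => G.ActiveTriple Z s.1 s.2 t.1) steps →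
      a ∈ X → lastVert a steps ∈ Y → a ∉ Z → lastVert a steps ∉ Z →
      G.DConnected X Y Z := by
  intro n
  induction n with
  | zero =>
    intro a steps hlen hw hch hX hY hZa hZb
    rw [Nat.le_zero, List.length_eq_zero_iff] at hlen
    subst hlen
    exact ⟨a, [], ⟨hw, by simp [pathVerts]⟩, hX, hY, hZa, hZb, hch⟩
  | succ n ih =>
    intro a steps hlen hw hch hX hY hZa hZb
    by_cases hnd : (pathVerts a steps).Nodup
    · exact ⟨a, steps, ⟨hw, hnd⟩, hX, hY, hZa, hZb, hch⟩
    · rw [pathVerts, List.nodup_cons] at hnd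
      by_cases hmem : a ∈ steps.map Prod.snd
      · -- cut to the suffix after the last occurrence of `a`
        obtain ⟨t₁, ⟨lp, pb⟩, t₂, rfl, hpa, -⟩ := split_last_snd hmem
        cases hpa
        have hw2 := ((isWalk_append_iff G pb t₁ _).mp hw).2.tail'.2
        have hch2 : List.Chain' (fun s t => G.ActiveTriple Z s.1 s.2 t.1) t₂ :=
          hch.suffix ⟨t₁ ++ [(lp, pb)], by simp⟩
        have hlast : lastVert pb t₂ = lastVert pb (t₁ ++ (lp, pb) :: t₂) := by
          rw [lastVert_append, lastVert_cons]
        refine ih pb t₂ ?_ hw2 hch2 ?_ ?_ ?_ ?_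
        · have := hlen; simp only [List.length_append, List.length_cons] at this; omega
        · exact hX
        · rw [hlast]; exact hY
        · exact hZa
        · rw [hlast]; exact hZb
      · -- some interior vertex repeats
        have hnd2 : ¬ (steps.map Prod.snd).Nodup := fun h => hnd ⟨hmem, h⟩
        obtain ⟨t₁, ⟨l₁, v⟩, t₂, ⟨l₂, v'⟩, t₃, rfl, hv⟩ := split_dup_snd hnd2
        simp only at hv
        cases hv
        -- decompose the walk
        obtain ⟨hw1, hwrest⟩ := (isWalk_append_iff G a t₁ _).mp hw
        obtain ⟨hlk1, hw2⟩ := hwrest.tail'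
        obtain ⟨hwt₂, hw3⟩ := (isWalk_append_iff G v t₂ _).mp hw2
        obtain ⟨hlk2, hwt₃⟩ := hw3.tail'
        -- the new, shorter walk
        have hw' : G.IsWalk a (t₁ ++ (l₁, v) :: t₃) :=
          (isWalk_append_iff G a t₁ _).mpr ⟨hw1, IsWalk.cons hlk1 hwt₃⟩
        have hlast' : lastVert a (t₁ ++ (l₁, v) :: t₃)
            = lastVert a (t₁ ++ ((l₁, v) :: (t₂ ++ (l₂, v) :: t₃))) := by
          simp [lastVert_append, lastVert_cons]
        -- the head of the middle segment
        obtain ⟨⟨m₁, u⟩, T, hT⟩ : ∃ s T, t₂ ++ (l₂, v) :: t₃ = s :: T := by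
          cases t₂ with
          | nil => exact ⟨_, _, rfl⟩
          | cons s t₂' => exact ⟨_, _, rfl⟩
        have hMT : ∃ T', t₂ ++ [(l₂, v)] = ((m₁, u) : Link × V) :: T' := by
          cases t₂ with
          | nil =>
            simp only [List.nil_append, List.cons.injEq] at hT
            exact ⟨[], by simp [hT.1]⟩
          | cons s t₂' =>
            simp only [List.cons_append, List.cons.injEq] at hT
            exact ⟨t₂' ++ [(l₂, v)], by simp [hT.1]⟩
        -- triples at the two occurrences of `v`
        have hchmid : List.Chain' (fun s t => G.ActiveTriple Z s.1 s.2 t.1)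
            ((l₁, v) :: (t₂ ++ (l₂, v) :: t₃)) :=
          hch.suffix ⟨t₁, by simp⟩
        have htrip1 : G.ActiveTriple Z l₁ v m₁ := by
          rw [hT] at hchmid
          exact (List.isChain_cons_cons.mp hchmid).1
        have hchmid2 : List.Chain' (fun s t => G.ActiveTriple Z s.1 s.2 t.1)
            ((l₂, v) :: t₃) :=
          hch.suffix ⟨t₁ ++ (l₁, v) :: t₂, by simp⟩
        -- chain' of the new walk
        have hch' : List.Chain' (fun s t => G.ActiveTriple Z s.1 s.2 t.1)
            (t₁ ++ (l₁, v) :: t₃) := by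
          unfold List.Chain'; rw [List.isChain_append]
          refine ⟨hch.prefix ⟨(l₁, v) :: t₂ ++ (l₂, v) :: t₃, by simp⟩, ?_, ?_⟩
          · rw [List.isChain_cons]
            refine ⟨?_, hchmid2.tail⟩
            intro y hy
            cases t₃ with
            | nil => simp at hy
            | cons s3 t₃' =>
              obtain ⟨m, w⟩ := s3
              simp only [List.head?_cons, Option.mem_def, Option.some.injEq] at hy
              subst hy
              have htrip2 : G.ActiveTriple Z l₂ v m := (List.isChain_cons_cons.mp hchmid2).1
              by_cases hcol : l₁.headRight = true ∧ m.headLeft = true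
              · -- collider junction: use the descend lemma
                have hvanc : v ∈ G.AncSet Z := by
                  by_cases hm₁ : m₁.headLeft = true
                  · exact activeTriple_collider htrip1 hcol.1 hm₁
                  · have hm₁f : m₁ = Link.fwd :=
                      headLeft_eq_false_iff.mp (by simpa using hm₁)
                    obtain ⟨T', hMT'⟩ := hMT
                    have hwM : G.IsWalk v (t₂ ++ [(l₂, v)]) :=
                      (isWalk_append_iff G v t₂ _).mpr
                        ⟨hwt₂, IsWalk.cons hlk2 (IsWalk.nil _)⟩
                    have hchM : List.Chain' (fun s t => G.ActiveTriple Z s.1 s.2 t.1)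
                        (t₂ ++ [(l₂, v)]) :=
                      hchmid.tail.prefix ⟨(m, w) :: t₃', by simp⟩
                    have hlastM : lastVert v (t₂ ++ [(l₂, v)]) = v := by
                      rw [lastVert_append]; rfl
                    have hrefl : G.Anc v v := Relation.ReflTransGen.refl
                    exact descend_lemma hac Z (t₂ ++ [(l₂, v)]) v u T' v
                      (by rw [hMT', hm₁f]) hwM hchM hrefl (by rw [hlastM]; exact hrefl)
                rw [ActiveTriple, if_pos (by rw [hcol.1, hcol.2]; rfl)]
                exact hvanc
              · rw [ActiveTriple, if_neg (by simpa using hcol)]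
                rcases Decidable.not_and_iff_or_not.mp hcol with h | h
                · exact activeTriple_noncollider htrip1 (fun hc => h hc.1)
                · exact activeTriple_noncollider htrip2 (fun hc => h hc.2)
          · -- junction between t₁ and the cut point: same as in the original walk
            have := (List.isChain_append.mp hch).2.2
            intro x hx y hy
            simp only [List.head?_cons, Option.mem_def, Option.some.injEq] at hy
            subst hy
            exact this x hx (l₁, v) (by simp)
        refine ih a (t₁ ++ (l₁, v) :: t₃) ?_ hw' hch' hX ?_ hZa ?_
        · have := hlen
          simp only [List.length_append, List.length_cons] at this ⊢
          omega
        · rw [hlast']; exact hY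
        · rw [hlast']; exact hZb


lemma chase {σ G : MixedGraph V} [Finite V]
    (hsub : ∀ ⦃a b : V⦄, σ.dir a b → G.dir a b) (hac : G.Acyclic) :
    ∀ v ∈ σ.verts, ∃ steps, σ.IsWalk v steps ∧ (∀ s ∈ steps, s.1 = Link.fwd) ∧
      σ.IsRoot (lastVert v steps) := by
  have h1 : IsTrans V (fun a b => Relation.TransGen G.dir b a) :=
    ⟨fun a b c hab hbc => hbc.trans hab⟩
  have h2 : IsIrrefl V (fun a b => Relation.TransGen G.dir b a) := by
    refine ⟨fun a h => ?_⟩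
    obtain ⟨b, hab, hba⟩ := Relation.TransGen.head'_iff.mp h
    exact hac hab hba
  have hwf : WellFounded (fun a b : V => Relation.TransGen G.dir b a) :=
    Finite.wellFounded_of_trans_of_irrefl _
  intro v
  induction v using hwf.induction with
  | _ v ih =>
    intro hv
    by_cases hout : ∃ w, σ.dir v w
    · obtain ⟨w, hw⟩ := hout
      obtain ⟨steps, hwk, hfwd, hroot⟩ :=
        ih w (Relation.TransGen.single (hsub hw)) ((σ.dir_mem hw).2)
      refine ⟨(Link.fwd, w) :: steps, IsWalk.cons hw hwk, ?_, ?_⟩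
      · intro s hs
        rcases List.mem_cons.mp hs with rfl | hs
        · rfl
        · exact hfwd s hs
      · rw [lastVert_cons]; exact hroot
    · push_neg at hout
      exact ⟨[], IsWalk.nil v, by simp, hv, hout⟩

lemma anc_of_fwd_walk {G : MixedGraph V} :
    ∀ (steps : List (Link × V)) (v : V), G.IsWalk v steps →
      (∀ s ∈ steps, s.1 = Link.fwd) → G.Anc v (lastVert v steps) := by
  intro steps
  induction steps with
  | nil => intro v _ _; exact Relation.ReflTransGen.refl
  | cons s rest ih =>
    intro v hw hfwd
    obtain ⟨l, b⟩ := s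
    have hl : l = Link.fwd := hfwd _ (List.mem_cons_self)
    subst hl
    obtain ⟨hlk, hwr⟩ := hw.tail'
    rw [lastVert_cons]
    exact Relation.ReflTransGen.head hlk (ih b hwr (fun s hs => hfwd s (List.mem_cons_of_mem _ hs)))

lemma isWalk_transfer {σ K : MixedGraph V} :
    ∀ (steps : List (Link × V)) (v : V), σ.IsWalk v steps →
      (∀ a (l : Link) b, (l, b) ∈ steps → σ.LinkOk a l b → K.LinkOk a l b) →
      K.IsWalk v steps := by
  intro steps
  induction steps with
  | nil => intro v _ _; exact IsWalk.nil v
  | cons s rest ih =>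
    intro v hw hcond
    obtain ⟨l, b⟩ := s
    obtain ⟨hlk, hwr⟩ := hw.tail'
    exact IsWalk.cons (hcond v l b (List.mem_cons_self) hlk)
      (ih b hwr (fun a l' b' hm => hcond a l' b' (List.mem_cons_of_mem _ hm)))

lemma chain'_active_of_fwd_walk {σ H : MixedGraph V} {Z : Set V}
    (hnr : ∀ v w, σ.dir v w → v ∉ Z) :
    ∀ (steps : List (Link × V)) (v : V), σ.IsWalk v steps →
      (∀ s ∈ steps, s.1 = Link.fwd) →
      List.Chain' (fun s t => H.ActiveTriple Z s.1 s.2 t.1) steps := by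
  intro steps
  induction steps with
  | nil => intro v _ _; exact List.isChain_nil
  | cons s rest ih =>
    intro v hw hfwd
    obtain ⟨l, b⟩ := s
    have hl : l = Link.fwd := hfwd _ (List.mem_cons_self)
    subst hl
    obtain ⟨hlk, hwr⟩ := hw.tail'
    unfold List.Chain'; rw [List.isChain_cons]
    refine ⟨?_, ih b hwr (fun s hs => hfwd s (List.mem_cons_of_mem _ hs))⟩
    intro y hy
    cases rest with
    | nil => simp at hy
    | cons t rest' =>
      obtain ⟨l₂, d⟩ := t
      simp only [List.head?_cons, Option.mem_def, Option.some.injEq] at hy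
      subst hy
      have hl₂ : l₂ = Link.fwd := hfwd _ (List.mem_cons_of_mem _ (List.mem_cons_self))
      subst hl₂
      have hbd : σ.dir b d := hwr.tail'.1
      rw [ActiveTriple, if_neg (by simp [Link.headRight, Link.headLeft])]
      exact hnr b d hbd

end MixedGraph

open MixedGraph

/-- rule 3, completeness direction: a suitable connecting
structure of interest in the mutilated unfolded graph yields a compatible
graph in which the third rule of Pearl's do-calculus fails. -/
theorem stmt14 {V C : Type} [Fintype V] [LinearOrder V]
    (π : V → C) (hπ : Function.Surjective π)
    (GC : MixedGraph C) (hGCverts : GC.verts = Set.univ)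
    (hne : ∃ G : MixedGraph V, MixedGraph.Compatible π GC G)
    (WC XC YC ZC : Set C)
    (hWX : Disjoint WC XC) (hWY : Disjoint WC YC) (hWZ : Disjoint WC ZC)
    (hXY : Disjoint XC YC) (hXZ : Disjoint XC ZC) (hYZ : Disjoint YC ZC)
    (σ : MixedGraph V) (hσ : σ.IsSOI)
    (hsub : σ.IsSubgraph ((MixedGraph.unfoldedGraph π GC).mutilate (π ⁻¹' WC) ∅))
    (hconn : σ.Connects (π ⁻¹' XC) (π ⁻¹' YC) ((π ⁻¹' WC) ∪ (π ⁻¹' ZC)))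
    (hroots : σ.roots ⊆ (π ⁻¹' WC) ∪ (π ⁻¹' ZC) ∪ (π ⁻¹' YC))
    (hacyc : ((MixedGraph.canonicalGraph π GC).union σ).Acyclic) :
    ∃ G : MixedGraph V, MixedGraph.Compatible π GC G ∧
      (G.mutilate ((π ⁻¹' WC) ∪
          ((π ⁻¹' XC) \ (G.mutilate (π ⁻¹' WC) ∅).AncSet (π ⁻¹' ZC))) ∅).DConnected
        (π ⁻¹' XC) (π ⁻¹' YC) ((π ⁻¹' WC) ∪ (π ⁻¹' ZC)) := by
  classical
  obtain ⟨G₀, hG₀⟩ := hne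
  set Wm : Set V := π ⁻¹' WC with hWm
  set Xm : Set V := π ⁻¹' XC with hXm
  set Ym : Set V := π ⁻¹' YC with hYm
  set Zm : Set V := π ⁻¹' ZC with hZm
  set G : MixedGraph V := (MixedGraph.canonicalGraph π GC).union σ with hGdef
  set AncW : Set V := (G.mutilate Wm ∅).AncSet Zm with hAncW
  set A : Set V := Wm ∪ (Xm \ AncW) with hA
  set H : MixedGraph V := G.mutilate A ∅ with hH
  set Z' : Set V := Wm ∪ Zm with hZ'
  -- pointwise disjointness facts
  have dXW : ∀ {v : V}, v ∈ Xm → v ∉ Wm := fun hx hw => Set.disjoint_left.mp hWX hw hx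
  have dXZ : ∀ {v : V}, v ∈ Xm → v ∉ Zm := fun hx hz => Set.disjoint_left.mp hXZ hx hz
  have dXY : ∀ {v : V}, v ∈ Xm → v ∉ Ym := fun hx hy => Set.disjoint_left.mp hXY hx hy
  have dYW : ∀ {v : V}, v ∈ Ym → v ∉ Wm := fun hy hw => Set.disjoint_left.mp hWY hw hy
  have dYZ : ∀ {v : V}, v ∈ Ym → v ∉ Zm := fun hy hz => Set.disjoint_left.mp hYZ hy hz
  have hXnotZ' : ∀ {v : V}, v ∈ Xm → v ∉ Z' := by
    rintro v hx (h | h)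
    · exact dXW hx h
    · exact dXZ hx h
  have hYnotZ' : ∀ {v : V}, v ∈ Ym → v ∉ Z' := by
    rintro v hy (h | h)
    · exact dYW hy h
    · exact dYZ hy h
  -- structure of σ edges
  have hσdir : ∀ ⦃a b : V⦄, σ.dir a b →
      (MixedGraph.unfoldedGraph π GC).dir a b ∧ b ∉ Wm := by
    intro a b h
    have h2 := hsub.2.1 h
    exact ⟨h2.1, h2.2.1⟩
  have hσbi : ∀ ⦃a b : V⦄, σ.bi a b →
      (MixedGraph.canonicalGraph π GC).bi a b ∧ a ∉ Wm ∧ b ∉ Wm := by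
    intro a b h
    exact hsub.2.2 h
  have hσsubG : ∀ ⦃a b : V⦄, σ.dir a b → G.dir a b := fun a b h => Or.inr h
  have hGdirGC : ∀ ⦃a b : V⦄, G.dir a b → GC.dir (π a) (π b) := by
    rintro a b (hcan | hs)
    · rcases hcan with ⟨_, h2, _⟩ | ⟨_, h2, _⟩ <;> exact h2
    · rcases (hσdir hs).1 with hcan | ⟨h2, _⟩
      · rcases hcan with ⟨_, h2, _⟩ | ⟨_, h2, _⟩ <;> exact h2
      · exact h2
  have hGbiGC : ∀ ⦃a b : V⦄, G.bi a b → a ≠ b ∧ GC.bi (π a) (π b) := by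
    rintro a b (hcan | hs)
    · exact hcan
    · exact (hσbi hs).1
  -- compatibility
  have hcompat : MixedGraph.Compatible π GC G := by
    refine ⟨⟨hacyc, ?_, ?_⟩, ?_, ?_, ?_⟩
    · rintro v (hcan | hs)
      · rcases hcan with ⟨_, _, hlt⟩ | ⟨hne', _, _⟩
        · exact lt_irrefl v hlt
        · exact hne' rfl
      · exact hσ.1.2.1 v hs
    · rintro v (⟨hne', _⟩ | hs)
      · exact hne' rfl
      · exact hσ.1.2.2 v hs
    · show Set.univ ∪ σ.verts = Set.univ
      simp
    · intro c d
      constructor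
      · intro hcd
        by_cases hcd' : c = d
        · subst hcd'
          obtain ⟨a, b, ha, hb, hab⟩ := (hG₀.2.2.1 c c).mp hcd
          have hne2 : a ≠ b := by
            rintro rfl
            exact hG₀.1.1 hab Relation.ReflTransGen.refl
          rcases lt_or_gt_of_ne hne2 with hlt | hlt
          · exact ⟨a, b, ha, hb, Or.inl (Or.inl ⟨by rw [ha, hb], by rw [ha, hb]; exact hcd, hlt⟩)⟩
          · exact ⟨b, a, hb, ha, Or.inl (Or.inl ⟨by rw [ha, hb], by rw [ha, hb]; exact hcd, hlt⟩)⟩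
        · obtain ⟨a, ha⟩ := hπ c
          obtain ⟨b, hb⟩ := hπ d
          obtain ⟨a₀, ha₀, hmin⟩ := Set.exists_min_image (MixedGraph.clusterOf π c) id
            (Set.toFinite _) ⟨a, ha⟩
          obtain ⟨b₀, hb₀, hmax⟩ := Set.exists_max_image (MixedGraph.clusterOf π d) id
            (Set.toFinite _) ⟨b, hb⟩
          have hπa : π a₀ = c := ha₀
          have hπb : π b₀ = d := hb₀
          refine ⟨a₀, b₀, hπa, hπb, Or.inl (Or.inr ⟨?_, ?_, ?_, ?_⟩)⟩
          · rw [hπa, hπb]; exact hcd'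
          · rw [hπa, hπb]; exact hcd
          · rw [hπa]; exact ⟨ha₀, fun y hy => hmin y hy⟩
          · rw [hπb]; exact ⟨hb₀, fun y hy => hmax y hy⟩
      · rintro ⟨a, b, rfl, rfl, hab⟩
        exact hGdirGC hab
    · intro c d
      constructor
      · intro hcd
        by_cases hcd' : c = d
        · subst hcd'
          obtain ⟨a, b, ha, hb, hab⟩ := (hG₀.2.2.2 c c).mp hcd
          have hne2 : a ≠ b := by
            rintro rfl
            exact hG₀.1.2.2 a hab
          exact ⟨a, b, ha, hb, Or.inl ⟨hne2, by rw [ha, hb]; exact hcd⟩⟩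
        · obtain ⟨a, ha⟩ := hπ c
          obtain ⟨b, hb⟩ := hπ d
          have hne2 : a ≠ b := by
            rintro rfl
            rw [ha] at hb
            exact hcd' hb
          exact ⟨a, b, ha, hb, Or.inl ⟨hne2, by rw [ha, hb]; exact hcd⟩⟩
      · rintro ⟨a, b, rfl, rfl, hab⟩
        exact (hGbiGC hab).2
  -- the mutilated graph is acyclic
  have hHac : H.Acyclic := fun a b h hanc =>
    hacyc h.1 (Relation.ReflTransGen.mono (r := H.dir) (p := G.dir) (fun x y hxy => hxy.1) b a hanc)
  -- σ vertex facts
  have hnonroot : ∀ v ∈ σ.verts, ¬ σ.IsRoot v → v ∉ Z' := fun v hv hr =>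
    hconn.2.2.2 v hv hr
  have hnotZ'dir : ∀ (v w : V), σ.dir v w → v ∉ Z' := fun v w h =>
    hnonroot v (σ.dir_mem h).1 (fun hr => hr.2 w h)
  obtain ⟨x₀, hx₀⟩ := hconn.1
  obtain ⟨y₀, hy₀⟩ := hconn.2.1
  have hrootYZ : ∀ r, σ.IsRoot r → r ∈ Zm ∪ Ym := by
    intro r hr
    have hrW : r ∉ Wm := by
      have hz : ∃ z ∈ σ.verts, z ≠ r := by
        by_cases hxr : x₀ = r
        · refine ⟨y₀, hy₀.1, fun h => ?_⟩
          exact dXY hx₀.2 (by rw [hxr, ← h]; exact hy₀.2)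
        · exact ⟨x₀, hx₀.1, hxr⟩
      obtain ⟨z, hzv, hzr⟩ := hz
      have hconn' := hσ.2.1.2 r hr.1 z hzv
      rcases Relation.ReflTransGen.cases_head hconn' with heq | ⟨s, hadj, -⟩
      · exact absurd heq (fun h => hzr h.symm)
      · rcases hadj with h | h | h
        · exact absurd h (hr.2 s)
        · exact (hσdir h).2
        · exact (hσbi h).2.1
    have hmem : r ∈ Wm ∪ Zm ∪ Ym := hroots hr
    rcases hmem with (h | h) | h
    · exact absurd h hrW
    · exact Or.inl h
    · exact Or.inr h
  -- the chase along directed edges of σ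
  have hchase := MixedGraph.chase hσsubG hacyc
  have hancW : ∀ (v : V) (steps : List (Link × V)), σ.IsWalk v steps →
      (∀ s ∈ steps, s.1 = Link.fwd) → MixedGraph.lastVert v steps ∈ Zm →
      v ∈ AncW := by
    intro v steps hw hfwd hlast
    refine ⟨MixedGraph.lastVert v steps, hlast, ?_⟩
    refine MixedGraph.anc_of_fwd_walk steps v ?_ hfwd
    refine MixedGraph.isWalk_transfer steps v hw ?_
    intro a l b hm hlk
    have hl : l = Link.fwd := hfwd _ hm
    subst hl
    exact ⟨hσsubG hlk, (hσdir hlk).2, Set.notMem_empty a⟩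
  have hchact := MixedGraph.chain'_active_of_fwd_walk (σ := σ) (H := H) (Z := Z') hnotZ'dir
  refine ⟨G, hcompat, ?_⟩
  by_cases hcut : ∃ u ∈ σ.verts, u ∈ Xm \ AncW
  · -- Case A: some vertex of σ is cut by the extra mutilation
    obtain ⟨u, huv, huX⟩ := hcut
    obtain ⟨steps, hwσ, hfwd, hroot⟩ := hchase u huv
    have hrY : MixedGraph.lastVert u steps ∈ Ym := by
      rcases hrootYZ _ hroot with hZ | hY
      · exact absurd (hancW u steps hwσ hfwd hZ) huX.2
      · exact hY
    have hPex : ∃ x ∈ MixedGraph.pathVerts u steps, x ∈ Xm \ AncW :=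
      ⟨u, List.mem_cons_self, huX⟩
    obtain ⟨t₁, x, t₂, hsplit, hPx, hnP⟩ := MixedGraph.split_last_pred hPex
    -- extract the sub-walk of the chase starting at `x`
    have key : ∃ tail', σ.IsWalk x tail' ∧ (∀ s ∈ tail', s.1 = Link.fwd) ∧
        MixedGraph.lastVert x tail' = MixedGraph.lastVert u steps ∧
        (∀ b ∈ tail'.map Prod.snd, b ∉ Xm \ AncW) ∧ x ∈ σ.verts := by
      rw [MixedGraph.pathVerts] at hsplit
      cases t₁ with
      | nil =>
        simp only [List.nil_append, List.cons.injEq] at hsplit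
        obtain ⟨rfl, hmap⟩ := hsplit
        exact ⟨steps, hwσ, hfwd, rfl, fun b hb => hnP b (by rwa [hmap] at hb), huv⟩
      | cons h0 t₁' =>
        simp only [List.cons_append, List.cons.injEq] at hsplit
        obtain ⟨rfl, hmap⟩ := hsplit
        obtain ⟨s₁, ⟨lp, pv⟩, s₂, rfl, hm1, hm2, hm3⟩ := MixedGraph.map_split hmap
        simp only at hm2
        subst hm2
        obtain ⟨hw1, hwrest⟩ := (MixedGraph.isWalk_append_iff σ u s₁ _).mp hwσ
        obtain ⟨hlk, hw2⟩ := hwrest.tail'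
        have hp1 : lp = Link.fwd := hfwd (lp, pv) (by simp)
        subst hp1
        have hpd : σ.dir (MixedGraph.lastVert u s₁) pv := hlk
        have hxv : pv ∈ σ.verts := (σ.dir_mem hpd).2
        refine ⟨s₂, hw2, ?_, ?_, ?_, hxv⟩
        · intro sx hsx; exact hfwd sx (by simp [hsx])
        · rw [MixedGraph.lastVert_append, MixedGraph.lastVert_cons]
        · intro b hb; exact hnP b (by rwa [hm3] at hb)
    obtain ⟨tail', hwx, hfwdx, hlastx, hnPx, hxv⟩ := key
    have hxX : x ∈ Xm := hPx.1
    have hwH : H.IsWalk x tail' := by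
      refine MixedGraph.isWalk_transfer tail' x hwx ?_
      intro a l b hm hlk
      have hl : l = Link.fwd := hfwdx _ hm
      subst hl
      refine ⟨hσsubG hlk, ?_, Set.notMem_empty a⟩
      rintro (hb | hb)
      · exact (hσdir hlk).2 hb
      · exact hnPx b (List.mem_map.mpr ⟨(Link.fwd, b), hm, rfl⟩) hb
    refine MixedGraph.walk_dconnected hHac Xm Ym Z' tail'.length x tail' le_rfl hwH
      (hchact tail' x hwx hfwdx) hxX ?_ (hXnotZ' hxX) ?_
    · rw [hlastx]; exact hrY
    · rw [hlastx]; exact hYnotZ' hrY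
  · -- Case B: no vertex of σ is cut
    push_neg at hcut
    have hdirH : ∀ ⦃a b : V⦄, σ.dir a b → H.dir a b := by
      intro a b h
      refine ⟨hσsubG h, ?_, Set.notMem_empty a⟩
      rintro (hb | hb)
      · exact (hσdir h).2 hb
      · exact hcut b (σ.dir_mem h).2 hb
    have hbiH : ∀ ⦃a b : V⦄, σ.bi a b → H.bi a b := by
      intro a b h
      have hnA : ∀ c ∈ σ.verts, c ∉ Wm → c ∉ A := by
        rintro c hcv hcW (hc | hc)
        · exact hcW hc
        · exact hcut c hcv hc
      exact ⟨Or.inr h, hnA a (σ.bi_mem h).1 (hσbi h).2.1, hnA b (σ.bi_mem h).2 (hσbi h).2.2⟩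
    have hlinkH : ∀ (a : V) (l : Link) (b : V), σ.LinkOk a l b → H.LinkOk a l b := by
      intro a l b h
      cases l with
      | fwd => exact hdirH h
      | bwd => exact hdirH h
      | both => exact hbiH h
    -- Lemma D: resolve any σ-vertex either into the ancestors of Z' or into a
    -- directed escape route to Y
    have hD : ∀ v ∈ σ.verts, v ∈ H.AncSet Z' ∨ ∃ S, H.IsWalk v S ∧
        List.Chain' (fun s t => H.ActiveTriple Z' s.1 s.2 t.1) S ∧
        MixedGraph.lastVert v S ∈ Ym ∧ MixedGraph.lastVert v S ∉ Z' ∧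
        (S = [] ∨ ∃ u S', S = (Link.fwd, u) :: S' ∧ σ.dir v u) := by
      intro v hv
      obtain ⟨steps, hwσ, hfwd, hroot⟩ := hchase v hv
      have hwH : H.IsWalk v steps :=
        MixedGraph.isWalk_transfer steps v hwσ (fun a l b _ hlk => hlinkH a l b hlk)
      rcases hrootYZ _ hroot with hZ | hY
      · exact Or.inl ⟨MixedGraph.lastVert v steps, Or.inr hZ,
          MixedGraph.anc_of_fwd_walk steps v hwH hfwd⟩
      · refine Or.inr ⟨steps, hwH, hchact steps v hwσ hfwd, hY, hYnotZ' hY, ?_⟩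
        cases steps with
        | nil => exact Or.inl rfl
        | cons s S' =>
          obtain ⟨l, u⟩ := s
          have hl : l = Link.fwd := hfwd _ (List.mem_cons_self)
          subst hl
          exact Or.inr ⟨u, S', rfl, hwσ.tail'.1⟩
    -- the invariant carried along the connecting walk
    have hprep : ∀ (v w : V) (l : Link) (S : List (Link × V)), σ.LinkOk v l w →
        List.Chain' (fun s t => H.ActiveTriple Z' s.1 s.2 t.1) S →
        (S = [] ∨ ∃ m u S', S = (m, u) :: S' ∧ σ.LinkOk w m u ∧
          (m.headLeft = true → w ∈ H.AncSet Z') ∧ (m.headLeft = false → w ∉ Z')) →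
        List.Chain' (fun s t => H.ActiveTriple Z' s.1 s.2 t.1) ((l, w) :: S) := by
      intro v w l S hlk hch hP
      unfold List.Chain'; rw [List.isChain_cons]
      refine ⟨?_, hch⟩
      intro y hy
      rcases hP with rfl | ⟨m, u, S', rfl, hlku, h1, h2⟩
      · simp at hy
      · simp only [List.head?_cons, Option.mem_def, Option.some.injEq] at hy
        subst hy
        show H.ActiveTriple Z' l w m
        by_cases hm : m.headLeft = true
        · by_cases hl' : l.headRight = true
          · rw [MixedGraph.ActiveTriple, if_pos (by rw [hl', hm]; rfl)]
            exact h1 hm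
          · have hlb : l = Link.bwd :=
              MixedGraph.headRight_eq_false_iff.mp (by simpa using hl')
            subst hlb
            rw [MixedGraph.ActiveTriple, if_neg (by simp [Link.headRight])]
            exact hnotZ'dir w v hlk
        · have hmf : m = Link.fwd :=
            MixedGraph.headLeft_eq_false_iff.mp (by simpa using hm)
          rw [MixedGraph.ActiveTriple,
            if_neg (by rw [hmf]; simp [Link.headLeft])]
          exact h2 (by simpa using hm)
    -- main induction along a σ-connection to y₀
    have hMW : ∀ v, Relation.ReflTransGen σ.Adj v y₀ → ∃ S, H.IsWalk v S ∧
        List.Chain' (fun s t => H.ActiveTriple Z' s.1 s.2 t.1) S ∧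
        MixedGraph.lastVert v S ∈ Ym ∧ MixedGraph.lastVert v S ∉ Z' ∧
        (S = [] ∨ ∃ m u S', S = (m, u) :: S' ∧ σ.LinkOk v m u ∧
          (m.headLeft = true → v ∈ H.AncSet Z') ∧ (m.headLeft = false → v ∉ Z')) := by
      intro v hv
      induction hv using Relation.ReflTransGen.head_induction_on with
      | refl =>
        exact ⟨[], MixedGraph.IsWalk.nil _, List.isChain_nil, hy₀.2, hYnotZ' hy₀.2, Or.inl rfl⟩
      | @head a c hadj htail ih =>
        obtain ⟨S, hwS, hchS, hlastY, hlastZ, hPS⟩ := ih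
        have hescape : a ∈ σ.verts → a ∉ H.AncSet Z' → ∃ S, H.IsWalk a S ∧
            List.Chain' (fun s t => H.ActiveTriple Z' s.1 s.2 t.1) S ∧
            MixedGraph.lastVert a S ∈ Ym ∧ MixedGraph.lastVert a S ∉ Z' ∧
            (S = [] ∨ ∃ m u S', S = (m, u) :: S' ∧ σ.LinkOk a m u ∧
              (m.headLeft = true → a ∈ H.AncSet Z') ∧ (m.headLeft = false → a ∉ Z')) := by
          intro hav hanc
          rcases hD a hav with h | ⟨S₂, hw2, hch2, hY2, hZ2, hsh⟩
          · exact absurd h hanc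
          · refine ⟨S₂, hw2, hch2, hY2, hZ2, ?_⟩
            rcases hsh with rfl | ⟨u, S', rfl, hdu⟩
            · exact Or.inl rfl
            · exact Or.inr ⟨Link.fwd, u, S', rfl, hdu,
                (by intro h; simp [Link.headLeft] at h), fun _ => hnotZ'dir a u hdu⟩
        rcases hadj with hd | hd | hd
        · -- a → c
          refine ⟨(Link.fwd, c) :: S, MixedGraph.IsWalk.cons (hlinkH a Link.fwd c hd) hwS,
            hprep a c Link.fwd S hd hchS hPS, ?_, ?_, ?_⟩
          · rw [MixedGraph.lastVert_cons]; exact hlastY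
          · rw [MixedGraph.lastVert_cons]; exact hlastZ
          · exact Or.inr ⟨Link.fwd, c, S, rfl, hd,
              (by intro h; simp [Link.headLeft] at h), fun _ => hnotZ'dir a c hd⟩
        · -- c → a
          by_cases hanc : a ∈ H.AncSet Z'
          · refine ⟨(Link.bwd, c) :: S, MixedGraph.IsWalk.cons (hlinkH a Link.bwd c hd) hwS,
              hprep a c Link.bwd S hd hchS hPS, ?_, ?_, ?_⟩
            · rw [MixedGraph.lastVert_cons]; exact hlastY
            · rw [MixedGraph.lastVert_cons]; exact hlastZ
            · exact Or.inr ⟨Link.bwd, c, S, rfl, hd, fun _ => hanc,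
                (by intro h; simp [Link.headLeft] at h)⟩
          · exact hescape (σ.dir_mem hd).2 hanc
        · -- a ↔ c
          by_cases hanc : a ∈ H.AncSet Z'
          · refine ⟨(Link.both, c) :: S, MixedGraph.IsWalk.cons (hlinkH a Link.both c hd) hwS,
              hprep a c Link.both S hd hchS hPS, ?_, ?_, ?_⟩
            · rw [MixedGraph.lastVert_cons]; exact hlastY
            · rw [MixedGraph.lastVert_cons]; exact hlastZ
            · exact Or.inr ⟨Link.both, c, S, rfl, hd, fun _ => hanc,
                (by intro h; simp [Link.headLeft] at h)⟩
          · exact hescape (σ.bi_mem hd).1 hanc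
    obtain ⟨S, hwS, hchS, hlY, hlZ, -⟩ := hMW x₀ (hσ.2.1.2 x₀ hx₀.1 y₀ hy₀.1)
    exact MixedGraph.walk_dconnected hHac Xm Ym Z' S.length x₀ S le_rfl hwS hchS
      hx₀.2 hlY (hXnotZ' hx₀.2) hlZ
end

section
/- Let G be a mixed graph and let X, Y, Z be pairwise disjoint subsets of its vertices. Let σ be a structure of interest that is a subgraph of G and connects X and Y under Z. Then there exists a structure of interest σ' that is a subgraph of σ, connects X and Y under Z, and satisfies |σ' ∩ X| = 1 and |σ' ∩ Y| = 1 (σ' contains exactly one vertex of X and exactly one vertex of Y). -/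
set_option linter.unusedSectionVars false
namespace MixedGraph

variable {V : Type} [Fintype V]

/-! ### Basic helper lemmas -/

lemma subgraph_refl (H : MixedGraph V) : H.IsSubgraph H :=
  ⟨subset_rfl, fun _ _ h => h, fun _ _ h => h⟩

lemma subgraph_trans {A B C : MixedGraph V} (h1 : A.IsSubgraph B) (h2 : B.IsSubgraph C) :
    A.IsSubgraph C :=
  ⟨h1.1.trans h2.1, fun _ _ h => h2.2.1 (h1.2.1 h), fun _ _ h => h2.2.2 (h1.2.2 h)⟩

lemma adj_symm (H : MixedGraph V) {a b : V} (h : H.Adj a b) : H.Adj b a := by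
  rcases h with h | h | h
  · exact Or.inr (Or.inl h)
  · exact Or.inl h
  · exact Or.inr (Or.inr (H.bi_symm h))

lemma adj_mem (H : MixedGraph V) {a b : V} (h : H.Adj a b) : a ∈ H.verts ∧ b ∈ H.verts := by
  rcases h with h | h | h
  · exact H.dir_mem h
  · exact ⟨(H.dir_mem h).2, (H.dir_mem h).1⟩
  · exact H.bi_mem h

lemma adj_of_sub {A B : MixedGraph V} (hsub : A.IsSubgraph B) {a b : V} (h : A.Adj a b) :
    B.Adj a b := by
  rcases h with h | h | h
  · exact Or.inl (hsub.2.1 h)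
  · exact Or.inr (Or.inl (hsub.2.1 h))
  · exact Or.inr (Or.inr (hsub.2.2 h))

lemma rtg_symm {R : V → V → Prop} (hR : ∀ a b, R a b → R b a) {a b : V}
    (h : Relation.ReflTransGen R a b) : Relation.ReflTransGen R b a := by
  induction h with
  | refl => exact .refl
  | tail _ h₂ ih => exact Relation.ReflTransGen.trans (.single (hR _ _ h₂)) ih

lemma reach_along {R : V → V → Prop} (p : ℕ → V) :
    ∀ n, (∀ i, i < n → R (p i) (p (i + 1))) → Relation.ReflTransGen R (p 0) (p n) := by
  intro n
  induction n with
  | zero => intro _; exact .refl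
  | succ n ih =>
      intro h
      exact (ih fun i hi => h i (by omega)).tail (h n (by omega))

/-- Every walk can be replaced by an injective walk. -/
lemma exists_walk {R : V → V → Prop} {a b : V} (h : Relation.ReflTransGen R a b) :
    ∃ (n : ℕ) (p : ℕ → V), p 0 = a ∧ p n = b ∧ ∀ i, i < n → R (p i) (p (i + 1)) := by
  induction h with
  | refl => exact ⟨0, fun _ => a, rfl, rfl, fun i hi => absurd hi (by omega)⟩
  | @tail b' c' h₁ h₂ ih =>
      obtain ⟨n, p, h0, hn, hs⟩ := ih
      refine ⟨n + 1, fun i => if i ≤ n then p i else c', by simp [h0], by simp, ?_⟩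
      intro i hi
      rcases Nat.lt_or_ge i n with h | h
      · simp only [if_pos (by omega : i ≤ n), if_pos (by omega : i + 1 ≤ n)]
        exact hs i h
      · have : i = n := by omega
        subst this
        simp only [if_pos le_rfl, if_neg (by omega : ¬ i + 1 ≤ i), hn]
        exact h₂

lemma exists_inj_walk {R : V → V → Prop} {a b : V} (h : Relation.ReflTransGen R a b) :
    ∃ (n : ℕ) (p : ℕ → V), p 0 = a ∧ p n = b ∧ (∀ i, i < n → R (p i) (p (i + 1))) ∧
      ∀ i, i ≤ n → ∀ j, j ≤ n → p i = p j → i = j := by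
  classical
  have hex : ∃ n, ∃ p : ℕ → V, p 0 = a ∧ p n = b ∧ ∀ i, i < n → R (p i) (p (i + 1)) := by
    obtain ⟨n, p, h0, hn, hs⟩ := exists_walk h
    exact ⟨n, p, h0, hn, hs⟩
  obtain ⟨p, h0, hn, hs⟩ := Nat.find_spec hex
  set n₀ := Nat.find hex with hn₀
  refine ⟨n₀, p, h0, hn, hs, ?_⟩
  by_contra hni
  push_neg at hni
  obtain ⟨i0, hi0, j0, hj0, heq0, hij0⟩ := hni
  -- wlog i < j
  obtain ⟨i, j, hi, hj, heq, hij⟩ :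
      ∃ i j, i ≤ n₀ ∧ j ≤ n₀ ∧ p i = p j ∧ i < j := by
    rcases Nat.lt_or_ge i0 j0 with h' | h'
    · exact ⟨i0, j0, hi0, hj0, heq0, h'⟩
    · exact ⟨j0, i0, hj0, hi0, heq0.symm, by omega⟩
  have hlt : n₀ - (j - i) < n₀ := by omega
  apply Nat.find_min hex hlt
  refine ⟨fun k => if k ≤ i then p k else p (k + (j - i)), by simp [h0], ?_, ?_⟩
  · by_cases hcase : n₀ - (j - i) ≤ i
    · have hji : j = n₀ := by omega
      have : n₀ - (j - i) = i := by omega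
      rw [this]
      simp only [if_pos le_rfl]
      rw [heq, hji, hn]
    · simp only [if_neg hcase]
      have : n₀ - (j - i) + (j - i) = n₀ := by omega
      rw [this, hn]
  · intro k hk
    by_cases h1 : k + 1 ≤ i
    · simp only [if_pos (by omega : k ≤ i), if_pos h1]
      exact hs k (by omega)
    · by_cases h2 : k ≤ i
      · have hki : k = i := by omega
        simp only [if_pos (le_of_eq hki), if_neg h1]
        have e1 : k + 1 + (j - i) = j + 1 := by omega
        rw [e1, hki, heq]
        exact hs j (by omega)
      · simp only [if_neg h2, if_neg (by omega : ¬ k + 1 ≤ i)]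
        have : k + 1 + (j - i) = k + (j - i) + 1 := by omega
        rw [this]
        exact hs (k + (j - i)) (by omega)

/-! ### The measure -/

/-- Size measure of a mixed graph. -/
noncomputable def Mu (H : MixedGraph V) : ℕ :=
  H.verts.ncard + {p : V × V | H.dir p.1 p.2}.ncard + {p : V × V | H.bi p.1 p.2}.ncard

/-- There is a strictly smaller connecting structure-of-interest subgraph. -/
def Shr (X Y Z : Set V) (H : MixedGraph V) : Prop :=
  ∃ τ : MixedGraph V, τ.IsSOI ∧ τ.IsSubgraph H ∧ τ.Connects X Y Z ∧ Mu τ < Mu H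

/-! ### Subgraphs of SOIs -/

lemma soi_sub {σ τ : MixedGraph V} (hsub : τ.IsSubgraph σ) (hσ : σ.IsSOI)
    (hcn : τ.Connected) : τ.IsSOI := by
  obtain ⟨⟨hac, hd, hb⟩, _, hdeg⟩ := hσ
  refine ⟨⟨?_, ?_, ?_⟩, hcn, ?_⟩
  · intro a b h hanc
    exact hac (hsub.2.1 h) (Relation.ReflTransGen.mono (r := τ.dir) (p := σ.dir) (fun _ _ hh => hsub.2.1 hh) b a hanc)
  · intro v h; exact hd v (hsub.2.1 h)
  · intro v h; exact hb v (hsub.2.2 h)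
  · intro v hv
    rcases hdeg v (hsub.1 hv) with h1 | ⟨⟨w₁, w₂, hw, hσ1, hσ2, hall⟩, hnoin, hnobi⟩
    · exact Or.inl fun _ _ h1' h2' => h1 (hsub.2.1 h1') (hsub.2.1 h2')
    · by_cases hboth : τ.dir v w₁ ∧ τ.dir v w₂
      · exact Or.inr ⟨⟨w₁, w₂, hw, hboth.1, hboth.2, fun w hwd => hall w (hsub.2.1 hwd)⟩,
          fun w hwd => hnoin w (hsub.2.1 hwd), fun w hwb => hnobi w (hsub.2.2 hwb)⟩
      · refine Or.inl fun a b' ha hb' => ?_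
        rcases hall a (hsub.2.1 ha) with rfl | rfl <;> rcases hall b' (hsub.2.1 hb') with rfl | rfl
        · rfl
        · exact absurd ⟨ha, hb'⟩ hboth
        · exact absurd ⟨hb', ha⟩ hboth
        · rfl

/-! ### Restriction to a vertex set -/

/-- Restriction of a mixed graph to a vertex set. -/
def restrictK (H : MixedGraph V) (K : Set V) : MixedGraph V where
  verts := K
  dir a b := H.dir a b ∧ a ∈ K ∧ b ∈ K
  bi a b := H.bi a b ∧ a ∈ K ∧ b ∈ K
  dir_mem := fun _ _ h => ⟨h.2.1, h.2.2⟩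
  bi_mem := fun _ _ h => ⟨h.2.1, h.2.2⟩
  bi_symm := fun _ _ h => ⟨H.bi_symm h.1, h.2.2, h.2.1⟩

/-! ### Deletion lemmas -/

lemma deleteDir_sub (H : MixedGraph V) (c d : V) : (H.deleteDir c d).IsSubgraph H :=
  ⟨subset_rfl, fun _ _ h => h.1, fun _ _ h => h⟩

lemma deleteBi_sub (H : MixedGraph V) (c d : V) : (H.deleteBi c d).IsSubgraph H :=
  ⟨subset_rfl, fun _ _ h => h, fun _ _ h => h.1⟩

lemma deleteDir_adj {H : MixedGraph V} {p q c d : V} (h : H.Adj p q)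
    (h1 : ¬(p = c ∧ q = d)) (h2 : ¬(p = d ∧ q = c)) : (H.deleteDir c d).Adj p q := by
  rcases h with h | h | h
  · exact Or.inl ⟨h, h1⟩
  · exact Or.inr (Or.inl ⟨h, fun hh => h2 ⟨hh.2, hh.1⟩⟩)
  · exact Or.inr (Or.inr h)

lemma deleteBi_adj {H : MixedGraph V} {p q c d : V} (h : H.Adj p q)
    (h1 : ¬(p = c ∧ q = d)) (h2 : ¬(p = d ∧ q = c)) : (H.deleteBi c d).Adj p q := by
  rcases h with h | h | h
  · exact Or.inl h
  · exact Or.inr (Or.inl h)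
  · exact Or.inr (Or.inr ⟨h, fun hh => hh.elim h1 h2⟩)

lemma deleteDir_cases {H : MixedGraph V} {p q c d : V} (h : H.Adj p q) :
    (H.deleteDir c d).Adj p q ∨ ((p = c ∧ q = d) ∨ (p = d ∧ q = c)) := by
  classical
  by_cases h1 : p = c ∧ q = d
  · exact Or.inr (Or.inl h1)
  · by_cases h2 : p = d ∧ q = c
    · exact Or.inr (Or.inr h2)
    · exact Or.inl (deleteDir_adj h h1 h2)

lemma deleteBi_cases {H : MixedGraph V} {p q c d : V} (h : H.Adj p q) :
    (H.deleteBi c d).Adj p q ∨ ((p = c ∧ q = d) ∨ (p = d ∧ q = c)) := by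
  classical
  by_cases h1 : p = c ∧ q = d
  · exact Or.inr (Or.inl h1)
  · by_cases h2 : p = d ∧ q = c
    · exact Or.inr (Or.inr h2)
    · exact Or.inl (deleteBi_adj h h1 h2)

lemma classes {H Del : MixedGraph V} {c d : V}
    (hcase : ∀ p q, H.Adj p q → Del.Adj p q ∨ ((p = c ∧ q = d) ∨ (p = d ∧ q = c)))
    {y v : V} (h : Relation.ReflTransGen H.Adj y v) :
    Relation.ReflTransGen Del.Adj y v ∨ Relation.ReflTransGen Del.Adj c v ∨
      Relation.ReflTransGen Del.Adj d v := by
  induction h with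
  | refl => exact Or.inl .refl
  | tail _ h₂ ih =>
      rcases hcase _ _ h₂ with hD | hpair
      · rcases ih with h | h | h
        · exact Or.inl (h.tail hD)
        · exact Or.inr (Or.inl (h.tail hD))
        · exact Or.inr (Or.inr (h.tail hD))
      · rcases hpair with ⟨_, rfl⟩ | ⟨_, rfl⟩
        · exact Or.inr (Or.inr .refl)
        · exact Or.inr (Or.inl .refl)

lemma reach_mem {H Del : MixedGraph V} (hverts : Del.verts = H.verts) {y₀ : V}
    (hy₀ : y₀ ∈ H.verts) {v : V} (h : Relation.ReflTransGen Del.Adj y₀ v) : v ∈ H.verts := by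
  induction h with
  | refl => exact hy₀
  | tail _ h₂ _ => exact hverts ▸ (adj_mem Del h₂).2

/-! ### The cut lemma -/

lemma cut_core {X Y Z : Set V} {H Del : MixedGraph V} {y₀ : V}
    (hmin : ¬ Shr X Y Z H) (hH : H.IsSOI) (hc : H.Connects X Y Z)
    (hsub : Del.IsSubgraph H) (hverts : Del.verts = H.verts)
    (hmu : Mu Del < Mu H) (hy₀ : y₀ ∈ H.verts)
    (hX : ∃ x' ∈ X, Relation.ReflTransGen Del.Adj y₀ x')
    (hY : ∃ y' ∈ Y, Relation.ReflTransGen Del.Adj y₀ y')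
    (hroots : ∀ v, Relation.ReflTransGen Del.Adj y₀ v → ¬ H.IsRoot v →
      v ∈ X ∪ Y ∪ Z ∨ ∃ w, Del.dir v w) : False := by
  classical
  set K : Set V := {v | Relation.ReflTransGen Del.Adj y₀ v} with hKdef
  have hKmem : ∀ {v : V}, Relation.ReflTransGen Del.Adj y₀ v → v ∈ K := fun h => h
  have hKV : K ⊆ H.verts := fun v hv => reach_mem hverts hy₀ hv
  set τ := restrictK Del K with hτdef
  have hτsub : τ.IsSubgraph H :=
    ⟨hKV, fun _ _ h => hsub.2.1 h.1, fun _ _ h => hsub.2.2 h.1⟩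
  have hKstep : ∀ {p q : V}, p ∈ K → Del.Adj p q → q ∈ K :=
    fun hp h => Relation.ReflTransGen.tail hp h
  have hτadjK : ∀ {p q : V}, p ∈ K → Del.Adj p q → τ.Adj p q := by
    intro p q hp h
    have hq : q ∈ K := hKstep hp h
    rcases h with h | h | h
    · exact Or.inl ⟨h, hp, hq⟩
    · exact Or.inr (Or.inl ⟨h, hq, hp⟩)
    · exact Or.inr (Or.inr ⟨h, hp, hq⟩)
  have hreachτ : ∀ v ∈ K, Relation.ReflTransGen τ.Adj y₀ v := by
    intro v hv
    induction hv with
    | refl => exact .refl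
    | tail h₁ h₂ ih => exact Relation.ReflTransGen.tail ih (hτadjK h₁ h₂)
  have hτconn : τ.Connected := by
    refine ⟨⟨y₀, Relation.ReflTransGen.refl⟩, ?_⟩
    intro p hp q hq
    exact (rtg_symm (fun _ _ => adj_symm τ) (hreachτ p hp)).trans (hreachτ q hq)
  have hτsoi : τ.IsSOI := soi_sub hτsub hH hτconn
  have hτc : τ.Connects X Y Z := by
    obtain ⟨x', hx'X, hx'K⟩ := hX
    obtain ⟨y', hy'Y, hy'K⟩ := hY
    refine ⟨⟨x', hKmem hx'K, hx'X⟩, ⟨y', hKmem hy'K, hy'Y⟩, ?_, ?_⟩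
    · rintro v ⟨hvK, hvnd⟩
      by_cases hroot : H.IsRoot v
      · exact hc.2.2.1 hroot
      · rcases hroots v hvK hroot with h | ⟨w, hw⟩
        · exact h
        · exact absurd ⟨hw, hvK, hKstep hvK (Or.inl hw)⟩ (hvnd w)
    · intro v hv hnr
      have hex : ∃ w, τ.dir v w := by
        by_contra hno
        push_neg at hno
        exact hnr ⟨hv, hno⟩
      obtain ⟨w, hw⟩ := hex
      have hHd : H.dir v w := hsub.2.1 hw.1
      exact hc.2.2.2 v (hKV hv) fun hr => hr.2 w hHd
  have hμτ : Mu τ ≤ Mu Del := by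
    have h1 : τ.verts.ncard ≤ Del.verts.ncard :=
      Set.ncard_le_ncard (hverts ▸ hKV) (Set.toFinite _)
    have h2 : {p : V × V | τ.dir p.1 p.2}.ncard ≤ {p : V × V | Del.dir p.1 p.2}.ncard :=
      Set.ncard_le_ncard (fun p hp => hp.1) (Set.toFinite _)
    have h3 : {p : V × V | τ.bi p.1 p.2}.ncard ≤ {p : V × V | Del.bi p.1 p.2}.ncard :=
      Set.ncard_le_ncard (fun p hp => hp.1) (Set.toFinite _)
    unfold Mu
    omega
  exact hmin ⟨τ, hτsoi, hτsub, hτc, lt_of_le_of_lt hμτ hmu⟩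

lemma cut_dir {X Y Z : Set V} {H : MixedGraph V} {c d y₀ : V}
    (hmin : ¬ Shr X Y Z H) (hH : H.IsSOI) (hc : H.Connects X Y Z)
    (hcd : H.dir c d) (hy₀ : y₀ ∈ H.verts)
    (hX : ∃ x' ∈ X, Relation.ReflTransGen (H.deleteDir c d).Adj y₀ x')
    (hY : ∃ y' ∈ Y, Relation.ReflTransGen (H.deleteDir c d).Adj y₀ y') :
    Relation.ReflTransGen (H.deleteDir c d).Adj y₀ c ∧
      (∀ w, H.dir c w → w = d) ∧ c ∉ X ∪ Y ∪ Z := by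
  classical
  by_contra hC
  have hmu : Mu (H.deleteDir c d) < Mu H := by
    have h2 : {p : V × V | (H.deleteDir c d).dir p.1 p.2}.ncard <
        {p : V × V | H.dir p.1 p.2}.ncard := by
      refine Set.ncard_lt_ncard ⟨fun p hp => hp.1, ?_⟩ (Set.toFinite _)
      intro hsup
      exact (hsup (show ((c, d) : V × V) ∈ {p : V × V | H.dir p.1 p.2} from hcd)).2 ⟨rfl, rfl⟩
    have e1 : (H.deleteDir c d).verts = H.verts := rfl
    have e2 : {p : V × V | (H.deleteDir c d).bi p.1 p.2} = {p : V × V | H.bi p.1 p.2} := rfl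
    unfold Mu
    rw [e1, e2]
    omega
  apply cut_core hmin hH hc (deleteDir_sub H c d) rfl hmu hy₀ hX hY
  intro v hvK hnr
  have hvV : v ∈ H.verts := reach_mem (Del := H.deleteDir c d) rfl hy₀ hvK
  have hex : ∃ w, H.dir v w := by
    by_contra hno
    push_neg at hno
    exact hnr ⟨hvV, hno⟩
  obtain ⟨w, hw⟩ := hex
  by_cases hvc : v = c
  · subst hvc
    by_cases hsole : ∀ w', H.dir v w' → w' = d
    · left
      by_contra hXYZ
      exact hC ⟨hvK, hsole, hXYZ⟩
    · push_neg at hsole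
      obtain ⟨w', hw', hne⟩ := hsole
      exact Or.inr ⟨w', hw', fun hpair => hne hpair.2⟩
  · exact Or.inr ⟨w, hw, fun hpair => hvc hpair.1⟩

lemma cut_bi {X Y Z : Set V} {H : MixedGraph V} {c d y₀ : V}
    (hmin : ¬ Shr X Y Z H) (hH : H.IsSOI) (hc : H.Connects X Y Z)
    (hcd : H.bi c d) (hy₀ : y₀ ∈ H.verts)
    (hX : ∃ x' ∈ X, Relation.ReflTransGen (H.deleteBi c d).Adj y₀ x')
    (hY : ∃ y' ∈ Y, Relation.ReflTransGen (H.deleteBi c d).Adj y₀ y') : False := by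
  classical
  have hmu : Mu (H.deleteBi c d) < Mu H := by
    have h3 : {p : V × V | (H.deleteBi c d).bi p.1 p.2}.ncard <
        {p : V × V | H.bi p.1 p.2}.ncard := by
      refine Set.ncard_lt_ncard ⟨fun p hp => hp.1, ?_⟩ (Set.toFinite _)
      intro hsup
      exact (hsup (show ((c, d) : V × V) ∈ {p : V × V | H.bi p.1 p.2} from hcd)).2
        (Or.inl ⟨rfl, rfl⟩)
    have e1 : (H.deleteBi c d).verts = H.verts := rfl
    have e2 : {p : V × V | (H.deleteBi c d).dir p.1 p.2} = {p : V × V | H.dir p.1 p.2} := rfl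
    unfold Mu
    rw [e1, e2]
    omega
  apply cut_core hmin hH hc (deleteBi_sub H c d) rfl hmu hy₀ hX hY
  intro v hvK hnr
  have hvV : v ∈ H.verts := reach_mem (Del := H.deleteBi c d) rfl hy₀ hvK
  have hex : ∃ w, H.dir v w := by
    by_contra hno
    push_neg at hno
    exact hnr ⟨hvV, hno⟩
  exact Or.inr hex

/-! ### The main forcing argument -/

lemma lemA {X Y Z : Set V} {H : MixedGraph V}
    (hmin : ¬ Shr X Y Z H) (hH : H.IsSOI) (hc : H.Connects X Y Z)
    {x₁ x₂ y : V} (hx₁ : x₁ ∈ H.verts ∩ X) (hx₂ : x₂ ∈ H.verts ∩ X)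
    (hy : y ∈ H.verts ∩ Y) (hne : x₁ ≠ x₂)
    {u : ℕ → V} {r : ℕ} (hu0 : u 0 = y) (hur : u r = x₂)
    (hus : ∀ i, i < r → H.Adj (u i) (u (i + 1)))
    (hui : ∀ i, i ≤ r → ∀ j, j ≤ r → u i = u j → i = j)
    {t : ℕ} (ht : t < r)
    (hIH : ∀ s, t < s → s < r → (∀ w, H.dir (u s) w → w = u (s + 1)) ∧ u s ∉ X ∪ Y ∪ Z)
    {Del : MixedGraph V} (hDsub : Del.IsSubgraph H)
    (hDkeep : ∀ p q, H.Adj p q → ¬(p = u t ∧ q = u (t + 1)) → ¬(p = u (t + 1) ∧ q = u t) →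
      Del.Adj p q)
    (hcls : Relation.ReflTransGen Del.Adj y x₁ ∨ Relation.ReflTransGen Del.Adj (u t) x₁ ∨
      Relation.ReflTransGen Del.Adj (u (t + 1)) x₁) :
    Relation.ReflTransGen Del.Adj y x₁ := by
  classical
  by_contra hK
  have hpre : ∀ s, s ≤ t → Relation.ReflTransGen Del.Adj y (u s) := by
    intro s hs
    have h0 : Relation.ReflTransGen Del.Adj (u 0) (u s) := by
      apply reach_along
      intro i hi
      apply hDkeep _ _ (hus i (by omega))
      · rintro ⟨e1, -⟩
        have := hui i (by omega) t (by omega) e1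
        omega
      · rintro ⟨e1, -⟩
        have := hui i (by omega) (t + 1) (by omega) e1
        omega
    rwa [hu0] at h0
  have hcls2 : Relation.ReflTransGen Del.Adj (u (t + 1)) x₁ := by
    rcases hcls with h | h | h
    · exact absurd h hK
    · exact absurd ((hpre t le_rfl).trans h) hK
    · exact h
  have hx₁im : ∀ s, s ≤ r → x₁ ≠ u s := by
    intro s hs heq
    rcases Nat.lt_or_ge t s with h1 | h1
    · rcases Nat.lt_or_ge s r with h2 | h2
      · exact (hIH s h1 h2).2 (Or.inl (Or.inl (heq ▸ hx₁.2)))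
      · have hsr : s = r := by omega
        exact hne (by rw [heq, hsr, hur])
    · exact hK (by rw [heq]; exact hpre s h1)
  obtain ⟨L, q, hq0, hqL, hqs, hqi⟩ :=
    exists_inj_walk (rtg_symm (fun _ _ => adj_symm Del) hcls2)
  have hMex : ∃ i, i ≤ L ∧ ∃ s, s ≤ r ∧ q i = u s := ⟨L, le_rfl, t + 1, by omega, by rw [hqL]⟩
  set m := Nat.find hMex with hm
  obtain ⟨hmL, s0, hs0r, hqm⟩ := Nat.find_spec hMex
  rw [← hm] at hmL hqm
  have hqlt : ∀ i, i < m → ∀ s, s ≤ r → q i ≠ u s := by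
    intro i him s hsr heq
    exact Nat.find_min hMex him ⟨by omega, s, hsr, heq⟩
  have hm1 : 1 ≤ m := by
    by_contra h0
    have hm0 : m = 0 := by omega
    rw [hm0] at hqm
    rw [hq0] at hqm
    exact hx₁im s0 hs0r hqm
  have hqsH : ∀ i, i < L → H.Adj (q i) (q (i + 1)) := fun i hi => adj_of_sub hDsub (hqs i hi)
  have hupathD : ∀ c d : V, ((∀ s, s ≤ r → c ≠ u s) ∨ (∀ s, s ≤ r → d ≠ u s)) →
      ∃ x' ∈ X, Relation.ReflTransGen (H.deleteDir c d).Adj y x' := by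
    intro c d hcd
    refine ⟨x₂, hx₂.2, ?_⟩
    have h0 : Relation.ReflTransGen (H.deleteDir c d).Adj (u 0) (u r) := by
      apply reach_along
      intro i hi
      apply deleteDir_adj (hus i hi)
      · rintro ⟨e1, e2⟩
        rcases hcd with h | h
        · exact h i (by omega) e1.symm
        · exact h (i + 1) (by omega) e2.symm
      · rintro ⟨e1, e2⟩
        rcases hcd with h | h
        · exact h (i + 1) (by omega) e2.symm
        · exact h i (by omega) e1.symm
    rwa [hu0, hur] at h0
  have hupathB : ∀ c d : V, ((∀ s, s ≤ r → c ≠ u s) ∨ (∀ s, s ≤ r → d ≠ u s)) →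
      ∃ x' ∈ X, Relation.ReflTransGen (H.deleteBi c d).Adj y x' := by
    intro c d hcd
    refine ⟨x₂, hx₂.2, ?_⟩
    have h0 : Relation.ReflTransGen (H.deleteBi c d).Adj (u 0) (u r) := by
      apply reach_along
      intro i hi
      apply deleteBi_adj (hus i hi)
      · rintro ⟨e1, e2⟩
        rcases hcd with h | h
        · exact h i (by omega) e1.symm
        · exact h (i + 1) (by omega) e2.symm
      · rintro ⟨e1, e2⟩
        rcases hcd with h | h
        · exact h (i + 1) (by omega) e2.symm
        · exact h i (by omega) e1.symm
    rwa [hu0, hur] at h0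
  have force : ∀ i, 1 ≤ i → i ≤ m →
      H.dir (q i) (q (i - 1)) ∧ (∀ w, H.dir (q i) w → w = q (i - 1)) ∧ q i ∉ X ∪ Y ∪ Z := by
    intro i
    induction i using Nat.strong_induction_on with
    | _ i ihi =>
      intro hi1 him
      have hiL : i - 1 < L := by omega
      have hqadj : H.Adj (q (i - 1)) (q i) := by
        have h0 := hqsH (i - 1) hiL
        rwa [show i - 1 + 1 = i from by omega] at h0
      have hnotim : ∀ s, s ≤ r → q (i - 1) ≠ u s := fun s hs => hqlt (i - 1) (by omega) s hs
      by_cases hbi : H.bi (q i) (q (i - 1))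
      · exact (cut_bi hmin hH hc hbi hy.1 (hupathB (q i) (q (i - 1)) (Or.inr hnotim))
          ⟨y, hy.2, .refl⟩).elim
      · by_cases hd1 : H.dir (q i) (q (i - 1))
        · by_cases hd2 : H.dir (q (i - 1)) (q i)
          · exact absurd (Relation.ReflTransGen.single hd2) (hH.1.1 hd1)
          · have hcut := cut_dir hmin hH hc hd1 hy.1
              (hupathD (q i) (q (i - 1)) (Or.inr hnotim)) ⟨y, hy.2, .refl⟩
            exact ⟨hd1, hcut.2.1, hcut.2.2⟩
        · have hd2 : H.dir (q (i - 1)) (q i) := by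
            rcases hqadj with h | h | h
            · exact h
            · exact absurd h hd1
            · exact absurd (H.bi_symm h) hbi
          exfalso
          have hcut := cut_dir hmin hH hc hd2 hy.1
            (hupathD (q (i - 1)) (q i) (Or.inl hnotim)) ⟨y, hy.2, .refl⟩
          rcases Nat.eq_or_lt_of_le hi1 with h1 | h1
          · apply hcut.2.2
            rw [show i - 1 = 0 from by omega, hq0]
            exact Or.inl (Or.inl hx₁.2)
          · have hprev := ihi (i - 1) (by omega) (by omega) (by omega)
            have he := hcut.2.1 _ hprev.1
            have := hqi (i - 1 - 1) (by omega) i (by omega) he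
            omega
  have hfm := force m hm1 le_rfl
  rcases Nat.lt_or_ge t s0 with hts | hts
  · rcases Nat.lt_or_ge s0 r with hsr | hsr
    · have hsole := (hIH s0 hts hsr).1
      have he := hsole (q (m - 1)) (by rw [← hqm]; exact hfm.1)
      exact hqlt (m - 1) (by omega) (s0 + 1) (by omega) he
    · have hs0 : s0 = r := by omega
      apply hfm.2.2
      rw [hqm, hs0, hur]
      exact Or.inl (Or.inl hx₂.2)
  · apply hK
    have h1 : Relation.ReflTransGen Del.Adj y (u s0) := hpre s0 hts
    have h2 : Relation.ReflTransGen Del.Adj x₁ (q m) := by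
      have h0 := reach_along q m (fun i hi => hqs i (by omega))
      rwa [hq0] at h0
    refine h1.trans ?_
    rw [← hqm]
    exact rtg_symm (fun _ _ => adj_symm Del) h2

lemma step_core {X Y Z : Set V} {H : MixedGraph V}
    (hmin : ¬ Shr X Y Z H) (hH : H.IsSOI) (hc : H.Connects X Y Z)
    {x₁ x₂ y : V} (hx₁ : x₁ ∈ H.verts ∩ X) (hx₂ : x₂ ∈ H.verts ∩ X)
    (hy : y ∈ H.verts ∩ Y) (hne : x₁ ≠ x₂)
    {u : ℕ → V} {r : ℕ} (hu0 : u 0 = y) (hur : u r = x₂)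
    (hus : ∀ i, i < r → H.Adj (u i) (u (i + 1)))
    (hui : ∀ i, i ≤ r → ∀ j, j ≤ r → u i = u j → i = j)
    {t : ℕ} (ht : t < r)
    (hIH : ∀ s, t < s → s < r → (∀ w, H.dir (u s) w → w = u (s + 1)) ∧ u s ∉ X ∪ Y ∪ Z) :
    (∀ w, H.dir (u t) w → w = u (t + 1)) ∧ u t ∉ X ∪ Y ∪ Z := by
  classical
  have hadj : H.Adj (u t) (u (t + 1)) := hus t ht
  have hyx₁ : Relation.ReflTransGen H.Adj y x₁ := hH.2.1.2 y hy.1 x₁ hx₁.1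
  by_cases hbi : H.bi (u t) (u (t + 1))
  · exfalso
    have hcls := classes (Del := H.deleteBi (u t) (u (t + 1))) (c := u t) (d := u (t + 1))
      (fun _ _ h => deleteBi_cases h) hyx₁
    have hA := lemA hmin hH hc hx₁ hx₂ hy hne hu0 hur hus hui ht hIH
      (deleteBi_sub H (u t) (u (t + 1))) (fun _ _ h h1 h2 => deleteBi_adj h h1 h2) hcls
    exact cut_bi hmin hH hc hbi hy.1 ⟨x₁, hx₁.2, hA⟩ ⟨y, hy.2, .refl⟩
  · by_cases hd1 : H.dir (u t) (u (t + 1))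
    · by_cases hd2 : H.dir (u (t + 1)) (u t)
      · exact absurd (Relation.ReflTransGen.single hd2) (hH.1.1 hd1)
      · have hcls := classes (Del := H.deleteDir (u t) (u (t + 1))) (c := u t) (d := u (t + 1))
          (fun _ _ h => deleteDir_cases h) hyx₁
        have hA := lemA hmin hH hc hx₁ hx₂ hy hne hu0 hur hus hui ht hIH
          (deleteDir_sub H (u t) (u (t + 1))) (fun _ _ h h1 h2 => deleteDir_adj h h1 h2) hcls
        have hcut := cut_dir hmin hH hc hd1 hy.1 ⟨x₁, hx₁.2, hA⟩ ⟨y, hy.2, .refl⟩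
        exact ⟨hcut.2.1, hcut.2.2⟩
    · have hd2 : H.dir (u (t + 1)) (u t) := by
        rcases hadj with h | h | h
        · exact absurd h hd1
        · exact h
        · exact absurd h hbi
      exfalso
      have hcls0 := classes (Del := H.deleteDir (u (t + 1)) (u t)) (c := u (t + 1)) (d := u t)
        (fun _ _ h => deleteDir_cases h) hyx₁
      have hcls : Relation.ReflTransGen (H.deleteDir (u (t + 1)) (u t)).Adj y x₁ ∨
          Relation.ReflTransGen (H.deleteDir (u (t + 1)) (u t)).Adj (u t) x₁ ∨
          Relation.ReflTransGen (H.deleteDir (u (t + 1)) (u t)).Adj (u (t + 1)) x₁ := by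
        rcases hcls0 with h | h | h
        · exact Or.inl h
        · exact Or.inr (Or.inr h)
        · exact Or.inr (Or.inl h)
      have hA := lemA hmin hH hc hx₁ hx₂ hy hne hu0 hur hus hui ht hIH
        (deleteDir_sub H (u (t + 1)) (u t)) (fun _ _ h h1 h2 => deleteDir_adj h h2 h1) hcls
      have hcut := cut_dir hmin hH hc hd2 hy.1 ⟨x₁, hx₁.2, hA⟩ ⟨y, hy.2, .refl⟩
      rcases Nat.eq_or_lt_of_le (show t + 1 ≤ r from ht) with h1 | h1
      · apply hcut.2.2
        rw [show t + 1 = r from h1, hur]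
        exact Or.inl (Or.inl hx₂.2)
      · have he := (hIH (t + 1) (by omega) h1).1 (u t) hd2
        have := hui t (by omega) (t + 2) (by omega) he
        omega

lemma minimal_core {X Y Z : Set V} (hXY : Disjoint X Y) {H : MixedGraph V}
    (hmin : ¬ Shr X Y Z H) (hH : H.IsSOI) (hc : H.Connects X Y Z) :
    ∀ x₁ ∈ H.verts ∩ X, ∀ x₂ ∈ H.verts ∩ X, x₁ = x₂ := by
  classical
  intro x₁ hx₁ x₂ hx₂
  by_contra hne
  obtain ⟨y, hy⟩ := hc.2.1
  obtain ⟨r, u, hu0, hur, hus, hui⟩ := exists_inj_walk (hH.2.1.2 y hy.1 x₂ hx₂.1)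
  have hr : 0 < r := by
    rcases Nat.eq_zero_or_pos r with h | h
    · exfalso
      have hyx : y = x₂ := by rw [← hu0, ← hur, h]
      exact Set.disjoint_left.mp hXY hx₂.2 (hyx ▸ hy.2)
    · exact h
  have main : ∀ k t, t < r → r - 1 - t ≤ k →
      (∀ w, H.dir (u t) w → w = u (t + 1)) ∧ u t ∉ X ∪ Y ∪ Z := by
    intro k
    induction k using Nat.strong_induction_on with
    | _ k ihk =>
      intro t ht hk
      exact step_core hmin hH hc hx₁ hx₂ hy hne hu0 hur hus hui ht
        (fun s h1 h2 => ihk (r - 1 - s) (by omega) s h2 (by omega))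
  have Q0 := main (r - 1) 0 hr le_rfl
  exact Q0.2 (Or.inl (Or.inr (hu0.symm ▸ hy.2)))

lemma connects_swap {X Y Z : Set V} {H : MixedGraph V} (h : H.Connects X Y Z) :
    H.Connects Y X Z := by
  obtain ⟨h1, h2, h3, h4⟩ := h
  refine ⟨h2, h1, ?_, h4⟩
  rwa [show Y ∪ X ∪ Z = X ∪ Y ∪ Z by rw [Set.union_comm Y X]]

lemma shr_swap {X Y Z : Set V} {H : MixedGraph V} (h : Shr Y X Z H) : Shr X Y Z H := by
  obtain ⟨τ, a, b, c, d⟩ := h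
  exact ⟨τ, a, b, connects_swap c, d⟩

end MixedGraph

open MixedGraph

/-- A connecting structure of interest can be replaced by a
connecting substructure meeting `X` and `Y` in exactly one vertex each. -/
theorem stmt15 {V : Type} [Fintype V] (G : MixedGraph V)
    (X Y Z : Set V) (hXV : X ⊆ G.verts) (hYV : Y ⊆ G.verts) (hZV : Z ⊆ G.verts)
    (hXY : Disjoint X Y) (hXZ : Disjoint X Z) (hYZ : Disjoint Y Z)
    (σ : MixedGraph V) (hσ : σ.IsSOI) (hsub : σ.IsSubgraph G)
    (hconn : σ.Connects X Y Z) :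
    ∃ σ' : MixedGraph V, σ'.IsSOI ∧ σ'.IsSubgraph σ ∧ σ'.Connects X Y Z ∧
      (∃ x, σ'.verts ∩ X = {x}) ∧ (∃ y, σ'.verts ∩ Y = {y}) := by

  classical
  have main : ∀ n (H : MixedGraph V), Mu H ≤ n → H.IsSOI → H.Connects X Y Z →
      ∃ τ : MixedGraph V, τ.IsSOI ∧ τ.IsSubgraph H ∧ τ.Connects X Y Z ∧
        (∃ x, τ.verts ∩ X = {x}) ∧ (∃ y, τ.verts ∩ Y = {y}) := by
    intro n
    induction n using Nat.strong_induction_on with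
    | _ n ih =>
      intro H hμ hS hC
      by_cases hshr : Shr X Y Z H
      · obtain ⟨τ, h1, h2, h3, h4⟩ := hshr
        obtain ⟨τ', p1, p2, p3, p4, p5⟩ := ih (Mu τ) (by omega) τ le_rfl h1 h3
        exact ⟨τ', p1, subgraph_trans p2 h2, p3, p4, p5⟩
      · refine ⟨H, hS, subgraph_refl H, hC, ?_, ?_⟩
        · obtain ⟨x, hx⟩ := hC.1
          have huniq := minimal_core hXY hshr hS hC
          exact ⟨x, Set.eq_singleton_iff_unique_mem.mpr ⟨hx, fun w hw => huniq w hw x hx⟩⟩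
        · obtain ⟨y, hy⟩ := hC.2.1
          have hmin' : ¬ Shr Y X Z H := fun h => hshr (shr_swap h)
          have huniq := minimal_core hXY.symm hmin' hS (connects_swap hC)
          exact ⟨y, Set.eq_singleton_iff_unique_mem.mpr ⟨hy, fun w hw => huniq w hw y hy⟩⟩
  exact main (Mu σ) σ le_rfl hσ hconn
end
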